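/- arXiv:2401.14927 — 2 statements merged into one kernel-verified Lean document; each statement's English description precedes it below -/
import Mathlib

section
/- In an Eulerian digraph D, the number of oriented spanning trees (spanning trees in which every non-root vertex has a unique directed path to the root) rooted at a fixed vertex r equals the number of oriented spanning trees of the transpose digraph D^T (obtained by reversing all edge orientations) rooted at r. -/
open Classical

/-- A finite multidigraph: finite vertex and edge types with initial and final
vertex maps. -/
structure Multidigraph where
  V : Type
  E : Type
  [fintV : Fintype V]
  [fintE : Fintype E]
  first : E → V
  last : E → V

attribute [instance] Multidigraph.fintV Multidigraph.fintE

namespace Multidigraph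

variable (D : Multidigraph)

/-- The out-degree of a vertex. -/
noncomputable def outdeg (v : D.V) : ℕ := Nat.card {e : D.E // D.first e = v}

/-- The in-degree of a vertex. -/
noncomputable def indeg (v : D.V) : ℕ := Nat.card {e : D.E // D.last e = v}

/-- Undirected adjacency using only edges in `T`. -/
def Adj (T : Set D.E) (a b : D.V) : Prop :=
  ∃ e ∈ T, (D.first e = a ∧ D.last e = b) ∨ (D.first e = b ∧ D.last e = a)

/-- Undirected reachability using only edges in `T`. -/
def Reach (T : Set D.E) : D.V → D.V → Prop := Relation.ReflTransGen (D.Adj T)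

/-- The underlying undirected graph is connected. -/
def Connected : Prop := ∀ a b : D.V, D.Reach Set.univ a b

/-- An Eulerian digraph: connected and with in-degree equal to out-degree at
every vertex. -/
def Eulerian : Prop := D.Connected ∧ ∀ v : D.V, D.indeg v = D.outdeg v

/-- `T` is a spanning tree of the underlying undirected graph: it connects all
vertices and has `|V| - 1` edges. -/
def IsSpanningTree (T : Set D.E) : Prop :=
  (∀ a b : D.V, D.Reach T a b) ∧ Nat.card T = Nat.card D.V - 1

/-- The out-degree of `v` in the subgraph `T` after reversing the orientations
of the edges in `S`. -/
noncomputable def outdegRev (T S : Set D.E) (v : D.V) : ℕ :=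
  Nat.card {e : D.E // (e ∈ T \ S ∧ D.first e = v) ∨ (e ∈ S ∧ D.last e = v)}

/-- `T` becomes an oriented spanning tree rooted at `r` (every vertex has a
unique directed path to `r`, i.e. every non-root vertex has out-degree `1` and
the root has out-degree `0` in the tree) after reversing exactly the edges of
`S ⊆ T`. -/
def IsOrientedSpanningTreeRev (T S : Set D.E) (r : D.V) : Prop :=
  D.IsSpanningTree T ∧ S ⊆ T ∧ (∀ v : D.V, v ≠ r → D.outdegRev T S v = 1) ∧
    D.outdegRev T S r = 0

/-- `T` is an oriented spanning tree rooted at `r`: every vertex has a unique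
directed path to `r`. -/
def IsOrientedSpanningTree (T : Set D.E) (r : D.V) : Prop :=
  D.IsOrientedSpanningTreeRev T ∅ r

/-- `T` is a `k`-spanning tree rooted at `r`: reversing the orientation of
exactly `k` of its edges yields an oriented spanning tree rooted at `r`. -/
def IsKSpanningTree (T : Set D.E) (r : D.V) (k : ℕ) : Prop :=
  ∃ S : Set D.E, Nat.card S = k ∧ D.IsOrientedSpanningTreeRev T S r

/-- `c D k r` is the number of `k`-spanning trees of `D` rooted at `r`. -/
noncomputable def c (k : ℕ) (r : D.V) : ℕ :=
  Nat.card {T : Set D.E // D.IsKSpanningTree T r k}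

/-- The transpose digraph: every edge reversed. -/
def transpose : Multidigraph := { D with first := D.last, last := D.first }

noncomputable def rowFun (r : D.V) (e : D.E) : {v : D.V // v ≠ r} → ℚ := fun v =>
  (if D.first e = v.1 then 1 else 0) - (if D.last e = v.1 then 1 else 0)

noncomputable def lap (r : D.V) : Matrix {v : D.V // v ≠ r} {v : D.V // v ≠ r} ℚ :=
  Matrix.of fun u v => ∑ e : D.E, if D.first e = u.1 then D.rowFun r e v else 0

noncomputable def gstep (r : D.V) (p : {v : D.V // v ≠ r} → D.E) : D.V → D.V :=
  fun v => if h : v = r then r else D.last (p ⟨v, h⟩)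

def Good (r : D.V) (p : {v : D.V // v ≠ r} → D.E) : Prop :=
  (∀ u, D.first (p u) = u.1) ∧ ∀ v : D.V, ∃ k, (D.gstep r p)^[k] v = r

lemma gstep_apply (r : D.V) (p : {v : D.V // v ≠ r} → D.E) (u : {v : D.V // v ≠ r}) :
    D.gstep r p u.1 = D.last (p u) := dif_neg u.2

lemma det_good (r : D.V) (p : {v : D.V // v ≠ r} → D.E)
    (hfst : ∀ u, D.first (p u) = u.1)
    (hac : ∀ v : D.V, ∃ k, (D.gstep r p)^[k] v = r) :
    (Matrix.of fun u v => D.rowFun r (p u) v).det = 1 := by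
  classical
  set g := D.gstep r p with hg
  have hM : ∀ u v : {v : D.V // v ≠ r}, (Matrix.of fun u v => D.rowFun r (p u) v) u v
      = (if u = v then (1:ℚ) else 0) - (if g u.1 = v.1 then 1 else 0) := by
    intro u v
    simp only [Matrix.of_apply, rowFun, hfst, D.gstep_apply r p u, hg]
    congr 1
    simp [Subtype.ext_iff]
  set f : {v : D.V // v ≠ r} → ℕ := fun u => Nat.find (hac u.1) with hf
  have hfpos : ∀ u, 0 < f u := by
    intro u
    apply Nat.pos_of_ne_zero
    intro h0
    have hs : g^[f u] u.1 = r := Nat.find_spec (hac u.1)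
    rw [h0] at hs
    exact u.2 hs
  have hstep : ∀ u v : {v : D.V // v ≠ r}, g u.1 = v.1 → f v < f u := by
    intro u v huv
    have hspec : g^[f u] u.1 = r := Nat.find_spec (hac u.1)
    have h1 : f u - 1 + 1 = f u := Nat.succ_pred_eq_of_pos (hfpos u)
    have h2 : g^[f u - 1] v.1 = r := by
      rw [← huv, ← Function.iterate_succ_apply, Nat.succ_eq_add_one, h1]; exact hspec
    have : f v ≤ f u - 1 := Nat.find_min' (hac v.1) h2
    exact lt_of_le_of_lt this (Nat.sub_lt (hfpos u) one_pos)
  have hfix : ∀ u : {v : D.V // v ≠ r}, g u.1 ≠ u.1 := by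
    intro u hu
    have hall : ∀ k, g^[k] u.1 = u.1 := fun k => Function.iterate_fixed hu k
    have h2 : g^[Nat.find (hac u.1)] u.1 = r := Nat.find_spec (hac u.1)
    rw [hall (Nat.find (hac u.1))] at h2
    exact u.2 h2
  have hbt : (Matrix.of fun u v => D.rowFun r (p u) v).BlockTriangular
      (fun u : {v : D.V // v ≠ r} => -(f u : ℤ)) := by
    intro i j hij
    rw [hM]
    by_cases hijeq : i = j
    · subst hijeq; exact absurd hij (lt_irrefl _)
    · rw [if_neg hijeq]
      by_cases hstepij : g i.1 = j.1
      · exfalso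
        have h1 := hstep i j hstepij
        have hij' : -(f j : ℤ) < -(f i : ℤ) := hij
        omega
      · rw [if_neg hstepij]; ring
  rw [hbt.det]
  apply Finset.prod_eq_one
  intro a _
  have hblock : (Matrix.of fun u v => D.rowFun r (p u) v).toSquareBlock
      (fun u : {v : D.V // v ≠ r} => -(f u : ℤ)) a = 1 := by
    ext i j
    by_cases hij : i = j
    · subst hij
      simp only [Matrix.toSquareBlock_def, Matrix.one_apply_eq]
      rw [Matrix.of_apply, hM, if_pos rfl, if_neg (hfix i.1)]
      ring
    · have hval : i.1 ≠ j.1 := fun h => hij (Subtype.ext h)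
      simp only [Matrix.toSquareBlock_def]
      rw [Matrix.of_apply, hM, if_neg hval, Matrix.one_apply_ne hij]
      by_cases hs : g i.1.1 = j.1.1
      · exfalso
        have h1 := hstep i.1 j.1 hs
        have h2 : (-(f i.1 : ℤ)) = a := i.2
        have h3 : (-(f j.1 : ℤ)) = a := j.2
        omega
      · rw [if_neg hs]; ring
  rw [hblock, Matrix.det_one]
lemma det_bad (r : D.V) (p : {v : D.V // v ≠ r} → D.E)
    (hfst : ∀ u, D.first (p u) = u.1)
    (hnac : ¬ ∀ v : D.V, ∃ k, (D.gstep r p)^[k] v = r) :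
    (Matrix.of fun u v => D.rowFun r (p u) v).det = 0 := by
  classical
  set g := D.gstep r p with hg
  have hM : ∀ u v : {v : D.V // v ≠ r}, (Matrix.of fun u v => D.rowFun r (p u) v) u v
      = (if u = v then (1:ℚ) else 0) - (if g u.1 = v.1 then 1 else 0) := by
    intro u v
    simp only [Matrix.of_apply, rowFun, hfst, D.gstep_apply r p u, hg]
    congr 1
    simp [Subtype.ext_iff]
  push_neg at hnac
  obtain ⟨v₀, hv₀⟩ := hnac
  have main : ∀ i j : ℕ, i < j → g^[i] v₀ = g^[j] v₀ →
      (Matrix.of fun u v => D.rowFun r (p u) v).det = 0 := by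
    intro i j hlt heq
    have hc : ∀ k, g^[k] (g^[i] v₀) ≠ r := fun k h =>
      hv₀ (k+i) (by rwa [Function.iterate_add_apply])
    set c : D.V := g^[i] v₀ with hcdef
    set m := j - i with hmdef
    have hm : 0 < m := Nat.sub_pos_of_lt hlt
    have hcyc : g^[m] c = c := by
      have h1 : m + i = j := Nat.sub_add_cancel hlt.le
      have h2 : g^[m] (g^[i] v₀) = g^[j] v₀ := by
        rw [← Function.iterate_add_apply, h1]
      rw [hcdef, h2, ← heq]
    set sc : ℕ → {v : D.V // v ≠ r} := fun k => ⟨g^[k] c, hc k⟩ with hsc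
    have hper : sc m = sc 0 := Subtype.ext (by show g^[m] c = c; exact hcyc)
    set Cyc : Finset {v : D.V // v ≠ r} := (Finset.range m).image sc with hCycdef
    set gg : {v : D.V // v ≠ r} → {v : D.V // v ≠ r} :=
      fun u => if h : g u.1 = r then u else ⟨g u.1, h⟩ with hggdef
    have hggsc : ∀ k, gg (sc k) = sc (k+1) := by
      intro k
      have h1 : g (sc k).1 = g^[k+1] c := (Function.iterate_succ_apply' g k c).symm
      have h2 : g (sc k).1 ≠ r := by rw [h1]; exact hc (k+1)
      rw [hggdef]
      simp only []
      rw [dif_neg h2]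
      exact Subtype.ext h1
    have hmemCyc : ∀ k, k < m → sc k ∈ Cyc := fun k hk =>
      Finset.mem_image.2 ⟨k, Finset.mem_range.2 hk, rfl⟩
    have hggne : ∀ u ∈ Cyc, g u.1 ≠ r := by
      intro u hu
      obtain ⟨k, hk, rfl⟩ := Finset.mem_image.1 hu
      have h1 : g (sc k).1 = g^[k+1] c := (Function.iterate_succ_apply' g k c).symm
      rw [h1]; exact hc (k+1)
    have hmap : ∀ u ∈ Cyc, gg u ∈ Cyc := by
      intro u hu
      obtain ⟨k, hk, rfl⟩ := Finset.mem_image.1 hu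
      rw [Finset.mem_range] at hk
      rw [hggsc]
      rcases Nat.lt_or_ge (k+1) m with h | h
      · exact hmemCyc _ h
      · have hkm : k + 1 = m := le_antisymm hk h
        rw [hkm, hper]; exact hmemCyc 0 hm
    have hsurj : ∀ b ∈ Cyc, ∃ a ∈ Cyc, gg a = b := by
      intro b hb
      obtain ⟨k, hk, rfl⟩ := Finset.mem_image.1 hb
      rw [Finset.mem_range] at hk
      cases k with
      | zero =>
          refine ⟨sc (m-1), hmemCyc _ (Nat.sub_lt hm one_pos), ?_⟩
          have hmm : m - 1 + 1 = m := Nat.succ_pred_eq_of_pos hm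
          rw [hggsc, hmm, hper]
      | succ k => exact ⟨sc k, hmemCyc _ (Nat.lt_of_succ_lt hk), hggsc k⟩
    have hinj : Set.InjOn gg (Cyc : Set {v : D.V // v ≠ r}) := by
      intro a ha b hb hab
      exact Finset.inj_on_of_surj_on_of_card_le (fun a _ => gg a)
        (fun a ha => hmap a ha)
        (fun b hb => (hsurj b hb).elim fun a h => ⟨a, h.1, h.2⟩) le_rfl ha hb hab
    rw [← Matrix.exists_vecMul_eq_zero_iff]
    refine ⟨fun u => if u ∈ Cyc then (1:ℚ) else 0, ?_, ?_⟩
    · intro h0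
      have h1 := congrFun h0 (sc 0)
      rw [if_pos (hmemCyc 0 hm)] at h1
      simpa using h1
    · funext v
      simp only [Matrix.vecMul, dotProduct, Pi.zero_apply]
      have hterm : ∀ u : {v : D.V // v ≠ r},
          (if u ∈ Cyc then (1:ℚ) else 0) * (Matrix.of fun u v => D.rowFun r (p u) v) u v
          = (if u ∈ Cyc then (if u = v then (1:ℚ) else 0) else 0)
            - (if u ∈ Cyc then (if gg u = v then (1:ℚ) else 0) else 0) := by
        intro u
        by_cases hu : u ∈ Cyc
        · rw [if_pos hu, if_pos hu, if_pos hu, one_mul, hM]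
          congr 1
          have h2 : gg u = ⟨g u.1, hggne u hu⟩ := dif_neg (hggne u hu)
          rw [h2]
          simp [Subtype.ext_iff]
        · rw [if_neg hu, if_neg hu, if_neg hu, zero_mul, sub_zero]
      rw [Finset.sum_congr rfl fun u _ => hterm u, Finset.sum_sub_distrib]
      have e1 : (∑ u : {v : D.V // v ≠ r},
          (if u ∈ Cyc then (if u = v then (1:ℚ) else 0) else 0))
          = if v ∈ Cyc then 1 else 0 := by
        rw [Finset.sum_ite_mem Finset.univ Cyc
          (fun u => if u = v then (1:ℚ) else 0), Finset.univ_inter,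
          Finset.sum_ite_eq' Cyc v (fun _ => (1:ℚ))]
      have e2 : (∑ u : {v : D.V // v ≠ r},
          (if u ∈ Cyc then (if gg u = v then (1:ℚ) else 0) else 0))
          = if v ∈ Cyc then 1 else 0 := by
        rw [Finset.sum_ite_mem Finset.univ Cyc
          (fun u => if gg u = v then (1:ℚ) else 0), Finset.univ_inter]
        rw [Finset.sum_nbij (i := gg) (t := Cyc)
          (g := fun w => if w = v then (1:ℚ) else 0) hmap hinj
          (fun b hb => (hsurj b hb).elim fun a h => ⟨a, h.1, h.2⟩)
          (fun a _ => rfl)]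
        rw [Finset.sum_ite_eq' Cyc v (fun _ => (1:ℚ))]
      rw [e1, e2, sub_self]
  obtain ⟨i, j, hne, hij⟩ := Finite.exists_ne_map_eq_of_infinite
    (fun k : ℕ => (⟨g^[k] v₀, hv₀ k⟩ : {v : D.V // v ≠ r}))
  have hij' : g^[i] v₀ = g^[j] v₀ := congrArg Subtype.val hij
  rcases Nat.lt_or_gt_of_ne hne with hlt | hlt
  · exact main i j hlt hij'
  · exact main j i hlt hij'.symm

lemma det_lap (r : D.V) :
    (D.lap r).det
      = ((Finset.univ.filter fun p : ({v : D.V // v ≠ r} → D.E) => D.Good r p).card : ℚ) := by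
  classical
  have h1 : D.lap r = Matrix.of (fun u : {v : D.V // v ≠ r} =>
      ∑ e ∈ Finset.univ.filter (fun e => D.first e = u.1), D.rowFun r e) := by
    ext u v
    simp only [lap, Matrix.of_apply, Finset.sum_apply]
    rw [Finset.sum_filter]
  rw [h1]
  have h2 : (Matrix.of fun u : {v : D.V // v ≠ r} =>
      ∑ e ∈ Finset.univ.filter (fun e => D.first e = u.1), D.rowFun r e).det
      = ∑ p ∈ Fintype.piFinset (fun u : {v : D.V // v ≠ r} =>
          Finset.univ.filter fun e => D.first e = u.1),
          (Matrix.of fun u v => D.rowFun r (p u) v).det :=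
    Matrix.detRowAlternating.toMultilinearMap.map_sum_finset
      (fun _ e => D.rowFun r e) _
  rw [h2]
  have h3 : ∀ p ∈ Fintype.piFinset (fun u : {v : D.V // v ≠ r} =>
      Finset.univ.filter fun e => D.first e = u.1),
      (Matrix.of fun u v => D.rowFun r (p u) v).det
      = if (∀ v : D.V, ∃ k, (D.gstep r p)^[k] v = r) then (1:ℚ) else 0 := by
    intro p hp
    have hfst : ∀ u, D.first (p u) = u.1 := by
      intro u
      have := Fintype.mem_piFinset.1 hp u
      simpa using (Finset.mem_filter.1 this).2
    by_cases hac : ∀ v : D.V, ∃ k, (D.gstep r p)^[k] v = r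
    · rw [if_pos hac]; exact D.det_good r p hfst hac
    · rw [if_neg hac]; exact D.det_bad r p hfst hac
  rw [Finset.sum_congr rfl h3, Finset.sum_boole]
  congr 2
  ext p
  simp only [Finset.mem_filter, Fintype.mem_piFinset, Finset.mem_univ, true_and, Good]
  rw [iff_comm]
  convert (Finset.mem_filter (s := Finset.univ) (p := fun q => (∀ u : {v : D.V // v ≠ r}, D.first (q u) = u.1) ∧
      ∀ v : D.V, ∃ k, (D.gstep r q)^[k] v = r) (a := p)).trans
    (and_iff_right (Finset.mem_univ p))
  congr 1

lemma card_Vne (r : D.V) : Nat.card {v : D.V // v ≠ r} = Nat.card D.V - 1 := by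
  classical
  rw [Nat.card_eq_fintype_card, Nat.card_eq_fintype_card]
  have h1 : Fintype.card {v : D.V // ¬ (v = r)} = Fintype.card D.V - Fintype.card {v : D.V // v = r} :=
    Fintype.card_subtype_compl _
  have h2 : Fintype.card {v : D.V // v = r} = 1 := Fintype.card_subtype_eq r
  rw [h2] at h1
  convert h1 using 2

lemma good_isOST (r : D.V) (p : {v : D.V // v ≠ r} → D.E) (hp : D.Good r p) :
    D.IsOrientedSpanningTree (Set.range p) r := by
  classical
  obtain ⟨hfst, hac⟩ := hp
  set g := D.gstep r p with hg
  set T : Set D.E := Set.range p with hT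
  have hreach_r : ∀ k (v : D.V), g^[k] v = r → D.Reach T v r := by
    intro k
    induction k with
    | zero =>
      intro v hv
      rw [Function.iterate_zero_apply] at hv
      rw [hv]
      exact Relation.ReflTransGen.refl
    | succ k ih =>
      intro v hv
      by_cases hvr : v = r
      · rw [hvr]
        exact Relation.ReflTransGen.refl
      · have hstep : D.Adj T v (g v) := by
          refine ⟨p ⟨v, hvr⟩, ⟨⟨v, hvr⟩, rfl⟩, Or.inl ⟨hfst _, ?_⟩⟩
          exact (D.gstep_apply r p ⟨v, hvr⟩).symm
        have h2 : D.Reach T (g v) r := ih (g v) (by rwa [Function.iterate_succ_apply] at hv)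
        exact Relation.ReflTransGen.head hstep h2
  have hsymm : Symmetric (D.Adj T) := by
    rintro a b ⟨e, he, h⟩
    exact ⟨e, he, h.symm⟩
  have hreach : ∀ a b, D.Reach T a b := by
    intro a b
    obtain ⟨k1, h1⟩ := hac a
    obtain ⟨k2, h2⟩ := hac b
    exact (hreach_r k1 a h1).trans
      (haveI : Std.Symm (D.Adj T) := ⟨fun a b h => hsymm h⟩; (Relation.ReflTransGen.symmetric (r := D.Adj T)).symm _ _ (hreach_r k2 b h2))
  have hinj : Function.Injective p := by
    intro u v huv
    apply Subtype.ext
    rw [← hfst u, ← hfst v, huv]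
  have hcard : Nat.card T = Nat.card D.V - 1 := by
    rw [hT, Nat.card_range_of_injective hinj, D.card_Vne r]
  have hout1 : ∀ v : D.V, v ≠ r → D.outdegRev T ∅ v = 1 := by
    intro v hv
    have hiff : ∀ e : D.E,
        ((e ∈ T \ ∅ ∧ D.first e = v) ∨ (e ∈ (∅ : Set D.E) ∧ D.last e = v))
        ↔ e = p ⟨v, hv⟩ := by
      intro e
      constructor
      · rintro (⟨⟨heT, -⟩, hef⟩ | ⟨he, -⟩)
        · obtain ⟨u, rfl⟩ := heT
          have hu : u = ⟨v, hv⟩ := Subtype.ext (by rw [← hfst u, hef])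
          rw [hu]
        · exact absurd he (Set.notMem_empty e)
      · rintro rfl
        exact Or.inl ⟨⟨⟨⟨v, hv⟩, rfl⟩, Set.notMem_empty _⟩, hfst _⟩
    rw [outdegRev, Nat.card_congr (Equiv.subtypeEquivRight hiff),
      Nat.card_eq_fintype_card, Fintype.card_subtype_eq]
  have hout0 : D.outdegRev T ∅ r = 0 := by
    rw [outdegRev]
    have hE : IsEmpty {e : D.E //
        (e ∈ T \ ∅ ∧ D.first e = r) ∨ (e ∈ (∅ : Set D.E) ∧ D.last e = r)} := by
      constructor
      rintro ⟨e, (⟨⟨heT, -⟩, hef⟩ | ⟨he, -⟩)⟩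
      · obtain ⟨u, rfl⟩ := heT
        exact u.2 (by rw [← hfst u, hef])
      · exact Set.notMem_empty e he
    exact Nat.card_of_isEmpty
  exact ⟨⟨hreach, hcard⟩, Set.empty_subset T, hout1, hout0⟩

lemma ost_good (r : D.V) (T : Set D.E) (hT : D.IsOrientedSpanningTree T r) :
    ∃ p : {v : D.V // v ≠ r} → D.E, D.Good r p ∧ Set.range p = T := by
  classical
  obtain ⟨⟨hreach, hcard⟩, -, hout1, hout0⟩ := hT
  have huniq : ∀ u : {v : D.V // v ≠ r}, ∃ e : D.E,
      (e ∈ T ∧ D.first e = u.1) ∧ ∀ e' : D.E, e' ∈ T ∧ D.first e' = u.1 → e' = e := by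
    intro u
    have h1 := hout1 u.1 u.2
    rw [outdegRev] at h1
    have hiff : ∀ e : D.E,
        ((e ∈ T \ ∅ ∧ D.first e = u.1) ∨ (e ∈ (∅ : Set D.E) ∧ D.last e = u.1))
        ↔ (e ∈ T ∧ D.first e = u.1) := by
      intro e
      constructor
      · rintro (⟨⟨heT, -⟩, hef⟩ | ⟨he, -⟩)
        · exact ⟨heT, hef⟩
        · exact absurd he (Set.notMem_empty e)
      · rintro ⟨heT, hef⟩
        exact Or.inl ⟨⟨heT, Set.notMem_empty e⟩, hef⟩
    have h2 : Nat.card {e : D.E // e ∈ T ∧ D.first e = u.1} = 1 :=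
      (Nat.card_congr (Equiv.subtypeEquivRight hiff)).symm.trans h1
    obtain ⟨hsub, ⟨⟨e, he⟩⟩⟩ := Nat.card_eq_one_iff_unique.1 h2
    refine ⟨e, he, fun e' he' => ?_⟩
    exact congrArg Subtype.val (@Subsingleton.elim _ hsub ⟨e', he'⟩ ⟨e, he⟩)
  choose p hp hup using huniq
  have hfst : ∀ u, D.first (p u) = u.1 := fun u => (hp u).2
  have hTr : Set.range p = T := by
    apply Set.Subset.antisymm
    · rintro e ⟨u, rfl⟩
      exact (hp u).1
    · intro e heT
      have hfr : D.first e ≠ r := by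
        intro h
        have h0 := hout0
        rw [outdegRev] at h0
        haveI : Nonempty {e' : D.E //
            (e' ∈ T \ ∅ ∧ D.first e' = r) ∨ (e' ∈ (∅ : Set D.E) ∧ D.last e' = r)} :=
          ⟨⟨e, Or.inl ⟨⟨heT, Set.notMem_empty e⟩, h⟩⟩⟩
        have hpos : 0 < Nat.card {e' : D.E //
            (e' ∈ T \ ∅ ∧ D.first e' = r) ∨ (e' ∈ (∅ : Set D.E) ∧ D.last e' = r)} :=
          Nat.card_pos
        omega
      exact ⟨⟨D.first e, hfr⟩, (hup ⟨D.first e, hfr⟩ e ⟨heT, rfl⟩).symm⟩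
  set g := D.gstep r p with hg
  have hC : ∀ a b : D.V, D.Adj T a b →
      ((∃ k, g^[k] a = r) ↔ (∃ k, g^[k] b = r)) := by
    rintro a b ⟨e, heT, hends⟩
    rw [← hTr] at heT
    obtain ⟨u, rfl⟩ := heT
    have hlast : D.last (p u) = g u.1 := (D.gstep_apply r p u).symm
    have key : (∃ k, g^[k] u.1 = r) ↔ (∃ k, g^[k] (g u.1) = r) := by
      constructor
      · rintro ⟨k, hk⟩
        cases k with
        | zero => exact absurd hk u.2
        | succ k => exact ⟨k, by rwa [Function.iterate_succ_apply] at hk⟩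
      · rintro ⟨k, hk⟩
        exact ⟨k + 1, by rwa [Function.iterate_succ_apply]⟩
    rcases hends with ⟨hf, hl⟩ | ⟨hf, hl⟩
    · have ha : a = u.1 := by rw [← hf, hfst u]
      have hb : b = g u.1 := by rw [← hl, hlast]
      rw [ha, hb]; exact key
    · have hb : b = u.1 := by rw [← hf, hfst u]
      have ha : a = g u.1 := by rw [← hl, hlast]
      rw [ha, hb]; exact key.symm
  have hCreach : ∀ a b : D.V, D.Reach T a b →
      ((∃ k, g^[k] a = r) ↔ (∃ k, g^[k] b = r)) := by
    intro a b h
    induction h with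
    | refl => exact Iff.rfl
    | tail _ step ih => exact ih.trans (hC _ _ step)
  have hac : ∀ v : D.V, ∃ k, g^[k] v = r := fun v =>
    (hCreach v r (hreach v r)).2 ⟨0, rfl⟩
  exact ⟨p, ⟨hfst, hac⟩, hTr⟩

lemma card_trees (r : D.V) :
    Nat.card {T : Set D.E // D.IsOrientedSpanningTree T r}
      = Nat.card {p : {v : D.V // v ≠ r} → D.E // D.Good r p} := by
  apply Nat.card_congr
  refine (Equiv.ofBijective (fun p : {p : {v : D.V // v ≠ r} → D.E // D.Good r p} =>
    (⟨Set.range p.1, D.good_isOST r p.1 p.2⟩ :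
      {T : Set D.E // D.IsOrientedSpanningTree T r})) ⟨?_, ?_⟩).symm
  · rintro ⟨p, hp⟩ ⟨p', hp'⟩ h
    simp only [Subtype.mk.injEq] at h ⊢
    funext u
    have h1 : p u ∈ Set.range p' := h ▸ Set.mem_range_self u
    obtain ⟨u', hu'⟩ := h1
    have h2 : u' = u := Subtype.ext (by rw [← hp'.1 u', hu', hp.1 u])
    rw [← hu', h2]
  · rintro ⟨T, hT⟩
    obtain ⟨p, hg, hr⟩ := D.ost_good r T hT
    exact ⟨⟨p, hg⟩, Subtype.ext hr⟩

lemma key (r : D.V) :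
    ((Nat.card {T : Set D.E // D.IsOrientedSpanningTree T r} : ℕ) : ℚ)
      = (D.lap r).det := by
  classical
  rw [D.card_trees r, D.det_lap r]
  congr 1
  rw [Nat.card_eq_fintype_card, Fintype.card_subtype]

lemma lap_transpose (r : D.V) (hbal : ∀ v : D.V, D.indeg v = D.outdeg v)
    (u v : {v : D.V // v ≠ r}) : D.transpose.lap r u v = D.lap r v u := by
  classical
  show (∑ e : D.E, if D.last e = u.1 then
      ((if D.last e = v.1 then (1:ℚ) else 0) - (if D.first e = v.1 then 1 else 0)) else 0)
    = ∑ e : D.E, if D.first e = v.1 then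
      ((if D.first e = u.1 then (1:ℚ) else 0) - (if D.last e = u.1 then 1 else 0)) else 0
  have hL : ∀ e : D.E, (if D.last e = u.1 then
      ((if D.last e = v.1 then (1:ℚ) else 0) - (if D.first e = v.1 then 1 else 0)) else 0)
      = (if D.last e = u.1 ∧ D.last e = v.1 then (1:ℚ) else 0)
        - (if D.last e = u.1 ∧ D.first e = v.1 then 1 else 0) := by
    intro e
    by_cases h : D.last e = u.1 <;> simp [h]
  have hR : ∀ e : D.E, (if D.first e = v.1 then
      ((if D.first e = u.1 then (1:ℚ) else 0) - (if D.last e = u.1 then 1 else 0)) else 0)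
      = (if D.first e = v.1 ∧ D.first e = u.1 then (1:ℚ) else 0)
        - (if D.first e = v.1 ∧ D.last e = u.1 then 1 else 0) := by
    intro e
    by_cases h : D.first e = v.1 <;> simp [h]
  rw [Finset.sum_congr rfl fun e _ => hL e, Finset.sum_congr rfl fun e _ => hR e,
    Finset.sum_sub_distrib, Finset.sum_sub_distrib]
  congr 1
  · by_cases huv : u = v
    · subst huv
      have h1 : ∀ e : D.E, (if D.last e = u.1 ∧ D.last e = u.1 then (1:ℚ) else 0)
          = (if D.last e = u.1 then 1 else 0) := by intro e; simp
      have h2 : ∀ e : D.E, (if D.first e = u.1 ∧ D.first e = u.1 then (1:ℚ) else 0)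
          = (if D.first e = u.1 then 1 else 0) := by intro e; simp
      rw [Finset.sum_congr rfl fun e _ => h1 e, Finset.sum_congr rfl fun e _ => h2 e,
        Finset.sum_boole, Finset.sum_boole]
      have hb := hbal u.1
      rw [indeg, outdeg, Nat.card_eq_fintype_card, Nat.card_eq_fintype_card,
        Fintype.card_subtype, Fintype.card_subtype] at hb
      exact_mod_cast congrArg (fun n : ℕ => (n : ℚ)) hb
    · have hne : u.1 ≠ v.1 := fun h => huv (Subtype.ext h)
      have h1 : ∀ e : D.E, (if D.last e = u.1 ∧ D.last e = v.1 then (1:ℚ) else 0) = 0 := by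
        intro e
        rw [if_neg]
        rintro ⟨ha, hbb⟩
        exact hne (ha ▸ hbb)
      have h2 : ∀ e : D.E, (if D.first e = v.1 ∧ D.first e = u.1 then (1:ℚ) else 0) = 0 := by
        intro e
        rw [if_neg]
        rintro ⟨ha, hbb⟩
        exact hne (hbb ▸ ha)
      rw [Finset.sum_congr rfl fun e _ => h1 e, Finset.sum_congr rfl fun e _ => h2 e]
  · apply Finset.sum_congr rfl
    intro e _
    by_cases h1 : D.last e = u.1 <;> by_cases h2 : D.first e = v.1 <;> simp [h1, h2]

end Multidigraph


/-- In an Eulerian digraph `D`, the number of oriented spanning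
trees rooted at a fixed vertex `r` equals the number of oriented spanning
trees of the transpose digraph `Dᵀ` rooted at `r`. -/
theorem stmt0 (D : Multidigraph) (hD : D.Eulerian) (r : D.V) :
    Nat.card {T : Set D.E // D.IsOrientedSpanningTree T r} =
      Nat.card {T : Set D.transpose.E // D.transpose.IsOrientedSpanningTree T r} := by
  classical
  obtain ⟨-, hbal⟩ := hD
  have h1 := D.key r
  have h2 := D.transpose.key r
  have h4 : D.transpose.lap r = (D.lap r).transpose := by
    ext u v
    exact D.lap_transpose r hbal u v
  rw [h4] at h2
  replace h2 := h2.trans (Matrix.det_transpose (D.lap r))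
  have h5 : ((Nat.card {T : Set D.E // D.IsOrientedSpanningTree T r} : ℕ) : ℚ)
      = ((Nat.card {T : Set D.transpose.E // D.transpose.IsOrientedSpanningTree T r} : ℕ) : ℚ) :=
    h1.trans h2.symm
  exact_mod_cast h5
end

section
/- Let D be an Eulerian digraph, r a vertex, and k a natural number. A k-spanning tree rooted at r is a spanning tree of D such that reversing the orientation of exactly k of its edges yields an oriented spanning tree rooted at r. Then the number c_k(D,r) of k-spanning trees rooted at r satisfies c_k(D,r) = sum over i from 0 to k of (-1)^i times the sum over cycle-free edge subsets E' of D with |E'| = k - i of binom(|V(D)| - 1 - (k-i), i) times c_0(D/E', r), where D/E' denotes the digraph obtained by contracting the edges of E'. -/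
open Classical

namespace Multidigraph

variable (D : Multidigraph)

/-- A set of edges is cycle-free if no edge connects two vertices that are
already connected by the remaining edges of the set (no undirected cycles). -/
def CycleFree (E' : Set D.E) : Prop :=
  ∀ e ∈ E', ¬ D.Reach (E' \ {e}) (D.first e) (D.last e)

/-- The relation on vertices induced by the contracted edges. -/
def contractRel (E' : Set D.E) (a b : D.V) : Prop :=
  ∃ e ∈ E', D.first e = a ∧ D.last e = b

/-- The contraction `D/E'`: vertices are identified along the edges of `E'`,
and the edges of `E'` are removed. -/
noncomputable def contract (E' : Set D.E) : Multidigraph where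
  V := Quotient (Relation.EqvGen.setoid (D.contractRel E'))
  E := {e : D.E // e ∉ E'}
  fintV := Fintype.ofFinite _
  fintE := Fintype.ofFinite _
  first e := Quotient.mk _ (D.first e.1)
  last e := Quotient.mk _ (D.last e.1)

end Multidigraph

section Aux

namespace Multidigraph

variable {D : Multidigraph}

lemma Adj.symm' {T : Set D.E} {a b : D.V} (h : D.Adj T a b) : D.Adj T b a := by
  obtain ⟨e, he, h | h⟩ := h
  · exact ⟨e, he, Or.inr h⟩
  · exact ⟨e, he, Or.inl h⟩

lemma Adj.mono' {T T' : Set D.E} (hT : T ⊆ T') {a b : D.V} (h : D.Adj T a b) :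
    D.Adj T' a b := by
  obtain ⟨e, he, h⟩ := h; exact ⟨e, hT he, h⟩

lemma reach_refl (T : Set D.E) (a : D.V) : D.Reach T a a := Relation.ReflTransGen.refl

lemma Reach.trans' {T : Set D.E} {a b c : D.V} (h : D.Reach T a b) (h' : D.Reach T b c) :
    D.Reach T a c := Relation.ReflTransGen.trans h h'

lemma Reach.symm' {T : Set D.E} {a b : D.V} (h : D.Reach T a b) : D.Reach T b a := by
  induction h with
  | refl => exact Relation.ReflTransGen.refl
  | tail _ h ih => exact Relation.ReflTransGen.trans (Relation.ReflTransGen.single h.symm') ih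

lemma Reach.mono' {T T' : Set D.E} (hT : T ⊆ T') {a b : D.V} (h : D.Reach T a b) :
    D.Reach T' a b := by
  induction h with
  | refl => exact Relation.ReflTransGen.refl
  | tail _ h ih => exact ih.tail (h.mono' hT)

lemma Adj.reach {T : Set D.E} {a b : D.V} (h : D.Adj T a b) : D.Reach T a b :=
  Relation.ReflTransGen.single h

lemma adj_of_mem {T : Set D.E} {e : D.E} (he : e ∈ T) :
    D.Adj T (D.first e) (D.last e) := ⟨e, he, Or.inl ⟨rfl, rfl⟩⟩

lemma reach_empty_iff {a b : D.V} : D.Reach ∅ a b ↔ a = b := by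
  constructor
  · intro h
    induction h with
    | refl => rfl
    | tail _ h ih => obtain ⟨e, he, _⟩ := h; exact absurd he (Set.notMem_empty e)
  · rintro rfl; exact D.reach_refl _ _

/-- Decomposition of reachability after inserting one edge. -/
lemma reach_insert_iff {U : Set D.E} {e : D.E} {a b : D.V} :
    D.Reach (insert e U) a b ↔ D.Reach U a b ∨
      (D.Reach U a (D.first e) ∧ D.Reach U (D.last e) b) ∨
      (D.Reach U a (D.last e) ∧ D.Reach U (D.first e) b) := by
  constructor
  · intro h
    induction h with
    | refl => exact Or.inl (D.reach_refl U a)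
    | @tail m t _ hadj ih =>
      obtain ⟨e', he', hor⟩ := hadj
      rcases Set.mem_insert_iff.mp he' with rfl | he'
      · -- the step uses edge e
        rcases hor with ⟨h1, h2⟩ | ⟨h1, h2⟩
        · -- first e' = m, last e' = t
          subst h1; subst h2
          rcases ih with ih | ⟨ih1, ih2⟩ | ⟨ih1, ih2⟩
          · exact Or.inr (Or.inl ⟨ih, D.reach_refl _ _⟩)
          · exact Or.inr (Or.inl ⟨ih1, D.reach_refl _ _⟩)
          · exact Or.inl ih1
        · subst h1; subst h2
          rcases ih with ih | ⟨ih1, ih2⟩ | ⟨ih1, ih2⟩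
          · exact Or.inr (Or.inr ⟨ih, D.reach_refl _ _⟩)
          · exact Or.inl ih1
          · exact Or.inr (Or.inr ⟨ih1, D.reach_refl _ _⟩)
      · -- the step uses an edge of U
        have hstep : D.Reach U m t := (Adj.reach ⟨e', he', hor⟩)
        rcases ih with ih | ⟨ih1, ih2⟩ | ⟨ih1, ih2⟩
        · exact Or.inl (ih.trans' hstep)
        · exact Or.inr (Or.inl ⟨ih1, ih2.trans' hstep⟩)
        · exact Or.inr (Or.inr ⟨ih1, ih2.trans' hstep⟩)
  · rintro (h | ⟨h1, h2⟩ | ⟨h1, h2⟩)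
    · exact h.mono' (Set.subset_insert e U)
    · exact ((h1.mono' (Set.subset_insert e U)).trans'
        (Adj.reach (D.adj_of_mem (Set.mem_insert e U)))).trans'
        (h2.mono' (Set.subset_insert e U))
    · exact ((h1.mono' (Set.subset_insert e U)).trans'
        ((Adj.reach (D.adj_of_mem (Set.mem_insert e U))).symm')).trans'
        (h2.mono' (Set.subset_insert e U))

lemma eqvGen_iff_reach {U : Set D.E} {a b : D.V} :
    Relation.EqvGen (D.contractRel U) a b ↔ D.Reach U a b := by
  constructor
  · intro h
    induction h with
    | rel x y h => obtain ⟨e, he, h1, h2⟩ := h; subst h1; subst h2;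
                   exact Adj.reach (D.adj_of_mem he)
    | refl x => exact D.reach_refl _ _
    | symm x y _ ih => exact ih.symm'
    | trans x y z _ _ ih1 ih2 => exact ih1.trans' ih2
  · intro h
    induction h with
    | refl => exact Relation.EqvGen.refl a
    | @tail m t _ hadj ih =>
      obtain ⟨e, he, ⟨h1, h2⟩ | ⟨h1, h2⟩⟩ := hadj
      · exact ih.trans _ _ _ (Relation.EqvGen.rel _ _ ⟨e, he, h1, h2⟩)
      · exact ih.trans _ _ _ ((Relation.EqvGen.rel _ _ ⟨e, he, h1, h2⟩).symm _ _)

end Multidigraph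

end Aux

section Aux2
namespace Multidigraph

variable {D : Multidigraph}

/-- Number of components of the graph with edge set `U`. -/
noncomputable def comp (D : Multidigraph) (U : Set D.E) : ℕ :=
  Nat.card (Quotient (Relation.EqvGen.setoid (D.contractRel U)))

lemma qmk_eq_iff {U : Set D.E} {a b : D.V} :
    (Quotient.mk (Relation.EqvGen.setoid (D.contractRel U)) a =
     Quotient.mk (Relation.EqvGen.setoid (D.contractRel U)) b) ↔ D.Reach U a b := by
  rw [Quotient.eq]
  exact eqvGen_iff_reach

lemma comp_insert_of_reach {U : Set D.E} {e : D.E}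
    (h : D.Reach U (D.first e) (D.last e)) : D.comp (insert e U) = D.comp U := by
  apply Nat.card_congr
  apply Quotient.congrRight
  intro a b
  show Relation.EqvGen _ a b ↔ Relation.EqvGen _ a b
  rw [eqvGen_iff_reach, eqvGen_iff_reach, reach_insert_iff]
  constructor
  · rintro (h' | ⟨h1, h2⟩ | ⟨h1, h2⟩)
    · exact h'
    · exact (h1.trans' h).trans' h2
    · exact (h1.trans' h.symm').trans' h2
  · exact Or.inl

lemma comp_insert_of_not_reach {U : Set D.E} {e : D.E}
    (h : ¬ D.Reach U (D.first e) (D.last e)) : D.comp (insert e U) + 1 = D.comp U := by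
  classical
  set c : Quotient (Relation.EqvGen.setoid (D.contractRel U)) :=
    Quotient.mk _ (D.first e) with hc
  have hle : (Quotient.mk (Relation.EqvGen.setoid (D.contractRel U)) (D.last e)) ≠ c := by
    rw [hc, Ne, qmk_eq_iff]
    intro h'; exact h h'.symm'
  -- the map on representatives
  let φ0 : D.V → {x : Quotient (Relation.EqvGen.setoid (D.contractRel U)) // x ≠ c} :=
    fun v => if hv : D.Reach U v (D.first e) then ⟨Quotient.mk _ (D.last e), hle⟩
      else ⟨Quotient.mk _ v, by rw [hc, Ne, qmk_eq_iff]; exact hv⟩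
  have wd : ∀ a b, Relation.EqvGen (D.contractRel (insert e U)) a b → φ0 a = φ0 b := by
    intro a b hab
    rw [eqvGen_iff_reach, reach_insert_iff] at hab
    rcases hab with h' | ⟨h1, h2⟩ | ⟨h1, h2⟩
    · by_cases ha : D.Reach U a (D.first e)
      · have hb : D.Reach U b (D.first e) := h'.symm'.trans' ha
        simp only [φ0, dif_pos ha, dif_pos hb]
      · have hb : ¬ D.Reach U b (D.first e) := fun hb => ha (h'.trans' hb)
        simp only [φ0, dif_neg ha, dif_neg hb]
        exact Subtype.ext (qmk_eq_iff.mpr h')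
    · have hb : ¬ D.Reach U b (D.first e) := by
        intro hb; exact h ((h2.trans' hb).symm')
      simp only [φ0, dif_pos h1, dif_neg hb]
      exact Subtype.ext (qmk_eq_iff.mpr h2)
    · have ha : ¬ D.Reach U a (D.first e) := by
        intro ha; exact h (ha.symm'.trans' h1)
      have hb : D.Reach U b (D.first e) := h2.symm'
      simp only [φ0, dif_neg ha, dif_pos hb]
      exact Subtype.ext (qmk_eq_iff.mpr h1.symm').symm
  let φ : Quotient (Relation.EqvGen.setoid (D.contractRel (insert e U))) →
      {x : Quotient (Relation.EqvGen.setoid (D.contractRel U)) // x ≠ c} :=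
    Quotient.lift φ0 wd
  have hφbij : Function.Bijective φ := by
    constructor
    · intro x y
      induction x using Quotient.ind
      induction y using Quotient.ind
      rename_i a b
      intro hxy
      have hxy' : φ0 a = φ0 b := hxy
      apply Quotient.sound
      show Relation.EqvGen _ a b
      rw [eqvGen_iff_reach, reach_insert_iff]
      by_cases ha : D.Reach U a (D.first e) <;> by_cases hb : D.Reach U b (D.first e)
      · exact Or.inl (ha.trans' hb.symm')
      · simp only [φ0, dif_pos ha, dif_neg hb] at hxy'
        have : D.Reach U (D.last e) b := qmk_eq_iff.mp (congrArg Subtype.val hxy')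
        exact Or.inr (Or.inl ⟨ha, this⟩)
      · simp only [φ0, dif_neg ha, dif_pos hb] at hxy'
        have : D.Reach U a (D.last e) := qmk_eq_iff.mp (congrArg Subtype.val hxy')
        exact Or.inr (Or.inr ⟨this, hb.symm'⟩)
      · simp only [φ0, dif_neg ha, dif_neg hb] at hxy'
        exact Or.inl (qmk_eq_iff.mp (congrArg Subtype.val hxy'))
    · rintro ⟨x, hx⟩
      induction x using Quotient.ind
      rename_i v
      have hv : ¬ D.Reach U v (D.first e) := by
        rw [hc, Ne, qmk_eq_iff] at hx; exact hx
      refine ⟨Quotient.mk _ v, ?_⟩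
      show φ0 v = _
      simp only [φ0, dif_neg hv]
  have h1 : D.comp (insert e U) =
      Nat.card {x : Quotient (Relation.EqvGen.setoid (D.contractRel U)) // x ≠ c} :=
    Nat.card_congr (Equiv.ofBijective φ hφbij)
  have h2 : Nat.card {x : Quotient (Relation.EqvGen.setoid (D.contractRel U)) // x ≠ c} + 1
      = D.comp U := by
    have h3 := Set.ncard_add_ncard_compl ({c} : Set (Quotient (Relation.EqvGen.setoid (D.contractRel U))))
    rw [Set.ncard_singleton] at h3
    have h4 : Nat.card {x : Quotient (Relation.EqvGen.setoid (D.contractRel U)) // x ≠ c}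
        = (({c} : Set _)ᶜ).ncard := by
      rw [← Nat.card_coe_set_eq]
      exact Nat.card_congr (Equiv.subtypeEquivRight (by intro x; simp))
    rw [h4]
    change _ = Nat.card (Quotient (Relation.EqvGen.setoid (D.contractRel U)))
    omega
  rw [h1, h2]

lemma comp_empty : D.comp (∅ : Set D.E) = Nat.card D.V := by
  symm
  apply Nat.card_congr
  refine Equiv.ofBijective (fun v => Quotient.mk _ v) ⟨?_, ?_⟩
  · intro a b hab
    exact reach_empty_iff.mp (qmk_eq_iff.mp hab)
  · intro x
    induction x using Quotient.ind
    rename_i v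
    exact ⟨v, rfl⟩

lemma le_comp_add_ncard (U : Set D.E) : Nat.card D.V ≤ D.comp U + U.ncard := by
  refine Set.Finite.induction_on
    (motive := fun s _ => Nat.card D.V ≤ D.comp s + s.ncard) U (Set.toFinite U) ?_ ?_
  · simp [comp_empty]
  · intro a s ha hs ih
    rw [Set.ncard_insert_of_notMem ha hs]
    by_cases h : D.Reach s (D.first a) (D.last a)
    · rw [comp_insert_of_reach h]; omega
    · rw [← comp_insert_of_not_reach h] at ih; omega

lemma comp_add_ncard_of_cycleFree {U : Set D.E} (h : D.CycleFree U) :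
    D.comp U + U.ncard = Nat.card D.V := by
  revert h
  refine Set.Finite.induction_on
    (motive := fun s _ => D.CycleFree s → D.comp s + s.ncard = Nat.card D.V) U (Set.toFinite U) ?_ ?_
  · intro _; simp [comp_empty]
  · intro a s ha hs ih h
    have hcf : D.CycleFree s := by
      intro e he hre
      exact h e (Set.mem_insert_of_mem a he)
        (hre.mono' (Set.diff_subset_diff_left (Set.subset_insert a s)))
    have hnr : ¬ D.Reach s (D.first a) (D.last a) := by
      have := h a (Set.mem_insert a s)
      rwa [Set.insert_diff_self_of_notMem ha] at this
    rw [Set.ncard_insert_of_notMem ha hs]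
    have h1 := comp_insert_of_not_reach hnr
    have h2 := ih hcf
    omega

lemma comp_eq_one (hcon : ∀ a b : D.V, D.Reach U a b) [Nonempty D.V] : D.comp U = 1 := by
  have : Subsingleton (Quotient (Relation.EqvGen.setoid (D.contractRel U))) := by
    constructor
    intro x y
    induction x using Quotient.ind
    induction y using Quotient.ind
    rename_i a b
    exact qmk_eq_iff.mpr (hcon a b)
  have : Nonempty (Quotient (Relation.EqvGen.setoid (D.contractRel U))) :=
    ⟨Quotient.mk _ (Classical.arbitrary D.V)⟩
  exact Nat.card_eq_one_iff_unique.mpr ⟨‹_›, ‹_›⟩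

lemma card_le_of_connected {U : Set D.E} (hcon : ∀ a b : D.V, D.Reach U a b)
    [Nonempty D.V] : Nat.card D.V ≤ U.ncard + 1 := by
  have := le_comp_add_ncard (D := D) U
  rw [comp_eq_one hcon] at this
  omega

lemma cycleFree_mono {T E' : Set D.E} (h : D.CycleFree T) (hsub : E' ⊆ T) :
    D.CycleFree E' := by
  intro e he hre
  exact h e (hsub he) (hre.mono' (Set.diff_subset_diff_left hsub))

lemma IsSpanningTree.cycleFree {T : Set D.E} (hsp : D.IsSpanningTree T) :
    D.CycleFree T := by
  intro e he hre
  have hne : Nonempty D.V := ⟨D.first e⟩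
  have hTcard : T.ncard = Nat.card D.V - 1 := by
    rw [← Nat.card_coe_set_eq]; exact hsp.2
  have hT1 : 1 ≤ T.ncard := (Set.ncard_pos (Set.toFinite T)).mpr ⟨e, he⟩
  have hall : ∀ a b : D.V, D.Reach (T \ {e}) a b := by
    intro a b
    have hT : T = insert e (T \ {e}) := by
      rw [Set.insert_diff_singleton, Set.insert_eq_self.mpr he]
    have := (hsp.1 a b)
    rw [hT] at this
    rcases reach_insert_iff.mp this with h' | ⟨h1, h2⟩ | ⟨h1, h2⟩
    · exact h'
    · exact (h1.trans' hre).trans' h2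
    · exact (h1.trans' hre.symm').trans' h2
  have := card_le_of_connected hall
  rw [Set.ncard_diff_singleton_of_mem he] at this
  omega

lemma IsSpanningTree.no_loop {T : Set D.E} (hsp : D.IsSpanningTree T) {e : D.E}
    (he : e ∈ T) : D.first e ≠ D.last e := by
  intro h
  apply hsp.cycleFree e he
  rw [h]
  exact D.reach_refl _ _

end Multidigraph
end Aux2

section Aux3

lemma nat_card_eq_one_of_existsUnique {α : Type*} {p : α → Prop} (h : ∃! x, p x) :
    Nat.card {x // p x} = 1 := by
  obtain ⟨a, ha, hu⟩ := h
  rw [Nat.card_eq_one_iff_unique]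
  exact ⟨⟨fun ⟨x, hx⟩ ⟨y, hy⟩ => Subtype.ext ((hu x hx).trans (hu y hy).symm)⟩, ⟨⟨a, ha⟩⟩⟩

lemma existsUnique_of_nat_card_eq_one {α : Type*} {p : α → Prop} (h : Nat.card {x // p x} = 1) :
    ∃! x, p x := by
  rw [Nat.card_eq_one_iff_unique] at h
  obtain ⟨hs, ⟨⟨a, ha⟩⟩⟩ := h
  exact ⟨a, ha, fun y hy => congrArg Subtype.val (hs.elim ⟨y, hy⟩ ⟨a, ha⟩)⟩

lemma nat_card_eq_zero_of_forall_not {α : Type*} {p : α → Prop} (h : ∀ x, ¬ p x) :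
    Nat.card {x // p x} = 0 := by
  have : IsEmpty {x // p x} := ⟨fun ⟨x, hx⟩ => h x hx⟩
  exact Nat.card_of_isEmpty

lemma nat_card_subtype_ne {α : Type*} [Fintype α] (a : α) :
    Nat.card {x // x ≠ a} = Nat.card α - 1 := by
  have h3 := Set.ncard_add_ncard_compl ({a} : Set α)
  rw [Set.ncard_singleton] at h3
  have h4 : Nat.card {x // x ≠ a} = (({a} : Set α)ᶜ).ncard := by
    rw [← Nat.card_coe_set_eq]
    exact Nat.card_congr (Equiv.subtypeEquivRight (by intro x; simp))
  omega

namespace Multidigraph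

variable {D : Multidigraph}

/-- The tail of an edge after reversing the edges in `S`. -/
noncomputable def tlS (D : Multidigraph) (S : Set D.E) (e : D.E) : D.V :=
  if e ∈ S then D.last e else D.first e

/-- The head of an edge after reversing the edges in `S`. -/
noncomputable def hdS (D : Multidigraph) (S : Set D.E) (e : D.E) : D.V :=
  if e ∈ S then D.first e else D.last e

lemma adj_tl_hd {T S : Set D.E} {e : D.E} (he : e ∈ T) :
    D.Adj T (D.tlS S e) (D.hdS S e) := by
  by_cases hs : e ∈ S
  · rw [tlS, hdS, if_pos hs, if_pos hs]; exact ⟨e, he, Or.inr ⟨rfl, rfl⟩⟩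
  · rw [tlS, hdS, if_neg hs, if_neg hs]; exact ⟨e, he, Or.inl ⟨rfl, rfl⟩⟩

lemma outdegRev_eq_card {T S : Set D.E} (hS : S ⊆ T) (v : D.V) :
    D.outdegRev T S v = Nat.card {e : D.E // e ∈ T ∧ D.tlS S e = v} := by
  apply Nat.card_congr
  apply Equiv.subtypeEquivRight
  intro e
  by_cases hs : e ∈ S
  · simp only [tlS, if_pos hs, Set.mem_diff]
    constructor
    · rintro (⟨⟨_, h⟩, _⟩ | ⟨_, h⟩)
      · exact absurd hs h
      · exact ⟨hS hs, h⟩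
    · rintro ⟨_, h⟩; exact Or.inr ⟨hs, h⟩
  · simp only [tlS, if_neg hs, Set.mem_diff]
    constructor
    · rintro (⟨⟨h1, _⟩, h2⟩ | ⟨h, _⟩)
      · exact ⟨h1, h2⟩
      · exact absurd h hs
    · rintro ⟨h1, h2⟩; exact Or.inl ⟨⟨h1, hs⟩, h2⟩

section OST

variable {T S : Set D.E} {r : D.V}

lemma no_out_root (hT : D.IsOrientedSpanningTreeRev T S r) {e : D.E} (he : e ∈ T) :
    D.tlS S e ≠ r := by
  intro h
  have h0 := hT.2.2.2
  rw [outdegRev_eq_card hT.2.1] at h0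
  have : Nonempty {e' : D.E // e' ∈ T ∧ D.tlS S e' = r} := ⟨⟨e, he, h⟩⟩
  have := Nat.card_pos (α := {e' : D.E // e' ∈ T ∧ D.tlS S e' = r})
  omega

lemma exists_unique_out (hT : D.IsOrientedSpanningTreeRev T S r) {v : D.V} (hv : v ≠ r) :
    ∃! e, e ∈ T ∧ D.tlS S e = v := by
  apply existsUnique_of_nat_card_eq_one
  rw [← outdegRev_eq_card hT.2.1]
  exact hT.2.2.1 v hv

/-- The step function mapping each vertex to the head of its unique outgoing edge. -/
noncomputable def fstep (D : Multidigraph) (T S : Set D.E) (v : D.V) : D.V :=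
  if h : ∃ e, e ∈ T ∧ D.tlS S e = v then D.hdS S h.choose else v

lemma fstep_spec (hT : D.IsOrientedSpanningTreeRev T S r) {e : D.E} (he : e ∈ T) :
    D.fstep T S (D.tlS S e) = D.hdS S e := by
  have hv : D.tlS S e ≠ r := no_out_root hT he
  obtain ⟨e₀, he₀, hu⟩ := exists_unique_out hT hv
  have hex : ∃ e', e' ∈ T ∧ D.tlS S e' = D.tlS S e := ⟨e, he, rfl⟩
  rw [fstep, dif_pos hex]
  rw [hu _ hex.choose_spec, hu e ⟨he, rfl⟩]

lemma fstep_root (hT : D.IsOrientedSpanningTreeRev T S r) : D.fstep T S r = r := by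
  rw [fstep, dif_neg]
  rintro ⟨e, he, htl⟩
  exact no_out_root hT he htl

lemma fstep_adj (hT : D.IsOrientedSpanningTreeRev T S r) {v : D.V} (hv : v ≠ r) :
    D.Adj T v (D.fstep T S v) := by
  obtain ⟨e, ⟨he, htl⟩, _⟩ := exists_unique_out hT hv
  rw [← htl, fstep_spec hT he]
  exact htl ▸ adj_tl_hd he

lemma fstep_reaches (hT : D.IsOrientedSpanningTreeRev T S r) :
    ∀ v : D.V, ∃ k, (D.fstep T S)^[k] v = r := by
  set f := D.fstep T S with hf
  set R := {v : D.V | ∃ k, f^[k] v = r} with hR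
  have hr : r ∈ R := ⟨0, rfl⟩
  have hedge : ∀ e ∈ T, (D.tlS S e ∈ R ↔ D.hdS S e ∈ R) := by
    intro e he
    have hv : D.tlS S e ≠ r := no_out_root hT he
    have hfe : f (D.tlS S e) = D.hdS S e := fstep_spec hT he
    constructor
    · rintro ⟨k, hk⟩
      cases k with
      | zero => exact absurd hk hv
      | succ k =>
        rw [Function.iterate_succ_apply, hfe] at hk
        exact ⟨k, hk⟩
    · rintro ⟨k, hk⟩
      exact ⟨k + 1, by rw [Function.iterate_succ_apply, hfe, hk]⟩
  have hadj : ∀ a b : D.V, D.Adj T a b → (a ∈ R ↔ b ∈ R) := by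
    rintro a b ⟨e, he, hab⟩
    have hiff := hedge e he
    by_cases hs : e ∈ S <;>
      simp only [tlS, hdS, if_pos, if_neg, hs] at hiff <;>
      rcases hab with ⟨h1, h2⟩ | ⟨h1, h2⟩ <;> subst h1 <;> subst h2
    · exact hiff.symm
    · exact hiff
    · exact hiff
    · exact hiff.symm
  have hreach : ∀ a b : D.V, D.Reach T a b → (a ∈ R ↔ b ∈ R) := by
    intro a b h
    induction h with
    | refl => exact Iff.rfl
    | tail _ hstep ih => exact ih.trans (hadj _ _ hstep)
  intro v
  exact (hreach v r (hT.1.1 v r)).mpr hr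

/-- Distance to the root along the step function. -/
noncomputable def rk (hre : ∀ v : D.V, ∃ k, (D.fstep T S)^[k] v = r) (v : D.V) : ℕ :=
  Nat.find (hre v)

lemma rk_iterate (hre : ∀ v : D.V, ∃ k, (D.fstep T S)^[k] v = r) (v : D.V) :
    (D.fstep T S)^[rk hre v] v = r := Nat.find_spec (hre v)

lemma rk_eq_zero_iff (hre : ∀ v : D.V, ∃ k, (D.fstep T S)^[k] v = r) {v : D.V} :
    rk hre v = 0 ↔ v = r := by
  constructor
  · intro h
    have := rk_iterate hre v
    rwa [h] at this
  · intro h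
    show Nat.find (hre v) = 0
    exact Nat.le_zero.mp (Nat.find_le h)

lemma rk_fstep (hre : ∀ v : D.V, ∃ k, (D.fstep T S)^[k] v = r) {v : D.V} (hv : v ≠ r) :
    rk hre (D.fstep T S v) + 1 = rk hre v := by
  have h1 : 1 ≤ rk hre v := by
    rcases Nat.eq_zero_or_pos (rk hre v) with h | h
    · exact absurd ((rk_eq_zero_iff hre).mp h) hv
    · exact h
  have h2 : rk hre (D.fstep T S v) ≤ rk hre v - 1 := by
    apply Nat.find_le
    have := rk_iterate hre v
    rwa [show rk hre v = (rk hre v - 1) + 1 by omega, Function.iterate_succ_apply] at this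
  have h3 : rk hre v ≤ rk hre (D.fstep T S v) + 1 := by
    apply Nat.find_le
    rw [Function.iterate_succ_apply]
    exact rk_iterate hre _
  omega

lemma rk_fstep_le (hre : ∀ v : D.V, ∃ k, (D.fstep T S)^[k] v = r)
    (hT : D.IsOrientedSpanningTreeRev T S r) (v : D.V) :
    rk hre (D.fstep T S v) ≤ rk hre v := by
  by_cases hv : v = r
  · subst hv; rw [fstep_root hT]
  · have := rk_fstep hre hv; omega

lemma rk_iterate_le (hre : ∀ v : D.V, ∃ k, (D.fstep T S)^[k] v = r)
    (hT : D.IsOrientedSpanningTreeRev T S r) (i : ℕ) (v : D.V) :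
    rk hre ((D.fstep T S)^[i] v) ≤ rk hre v := by
  induction i with
  | zero => exact le_refl _
  | succ i ih =>
    rw [Function.iterate_succ_apply']
    exact (rk_fstep_le hre hT _).trans ih

lemma reach_hd (hT : D.IsOrientedSpanningTreeRev T S r) {e : D.E} (he : e ∈ T) :
    D.Reach (T \ {e}) (D.hdS S e) r := by
  have hre := fstep_reaches hT
  have main : ∀ n x, rk hre x ≤ n →
      D.Reach (T \ {e}) x r ∨ ∃ i, (D.fstep T S)^[i] x = D.tlS S e := by
    intro n
    induction n with
    | zero =>
      intro x hx
      have : x = r := (rk_eq_zero_iff hre).mp (Nat.le_zero.mp hx)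
      subst this
      exact Or.inl (D.reach_refl _ _)
    | succ n ih =>
      intro x hx
      by_cases hxr : x = r
      · subst hxr; exact Or.inl (D.reach_refl _ _)
      by_cases hxt : x = D.tlS S e
      · exact Or.inr ⟨0, by simpa using hxt⟩
      · obtain ⟨e', ⟨he', htl'⟩, _⟩ := exists_unique_out hT hxr
        have hne : e' ≠ e := by
          intro h; subst h; exact hxt htl'.symm
        have hadj : D.Adj (T \ {e}) x (D.fstep T S x) := by
          rw [← htl', fstep_spec hT he']
          exact adj_tl_hd ⟨he', hne⟩
        have hrk : rk hre (D.fstep T S x) ≤ n := by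
          have := rk_fstep hre hxr; omega
        rcases ih _ hrk with h | ⟨i, hi⟩
        · exact Or.inl (hadj.reach.trans' h)
        · exact Or.inr ⟨i + 1, by rw [Function.iterate_succ_apply, hi]⟩
  have hv : D.tlS S e ≠ r := no_out_root hT he
  have hfe : D.fstep T S (D.tlS S e) = D.hdS S e := fstep_spec hT he
  rcases main (rk hre (D.hdS S e)) (D.hdS S e) (le_refl _) with h | ⟨i, hi⟩
  · exact h
  · exfalso
    have h1 : rk hre (D.tlS S e) ≤ rk hre (D.hdS S e) := by
      rw [← hi]; exact rk_iterate_le hre hT i _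
    have h2 : rk hre (D.hdS S e) + 1 = rk hre (D.tlS S e) := by
      rw [← hfe]; exact rk_fstep hre hv
    omega

lemma not_reach_tl (hT : D.IsOrientedSpanningTreeRev T S r) {e : D.E} (he : e ∈ T) :
    ¬ D.Reach (T \ {e}) (D.tlS S e) r := by
  have hre := fstep_reaches hT
  set v := D.tlS S e with hvdef
  have hv : v ≠ r := no_out_root hT he
  set B := {x : D.V | ∃ i, (D.fstep T S)^[i] x = v} with hB
  have hstep : ∀ e' , e' ∈ T → e' ≠ e → (D.tlS S e' ∈ B ↔ D.hdS S e' ∈ B) := by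
    intro e' he' hne
    have htlne : D.tlS S e' ≠ v := by
      intro h
      obtain ⟨e₀, _, hu⟩ := exists_unique_out hT (h ▸ no_out_root hT he')
      exact hne ((hu e' ⟨he', h⟩).trans (hu e ⟨he, rfl⟩).symm)
    have hfe' : D.fstep T S (D.tlS S e') = D.hdS S e' := fstep_spec hT he'
    constructor
    · rintro ⟨i, hi⟩
      cases i with
      | zero => exact absurd hi htlne
      | succ i =>
        rw [Function.iterate_succ_apply, hfe'] at hi
        exact ⟨i, hi⟩
    · rintro ⟨i, hi⟩
      exact ⟨i + 1, by rw [Function.iterate_succ_apply, hfe', hi]⟩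
  have hadj : ∀ a b : D.V, D.Adj (T \ {e}) a b → (a ∈ B ↔ b ∈ B) := by
    rintro a b ⟨e', ⟨he', hne⟩, hab⟩
    have hiff := hstep e' he' hne
    by_cases hs : e' ∈ S <;>
      simp only [tlS, hdS, if_pos, if_neg, hs] at hiff <;>
      rcases hab with ⟨h1, h2⟩ | ⟨h1, h2⟩ <;> subst h1 <;> subst h2
    · exact hiff.symm
    · exact hiff
    · exact hiff
    · exact hiff.symm
  have hcl : ∀ a b : D.V, D.Reach (T \ {e}) a b → (a ∈ B ↔ b ∈ B) := by
    intro a b h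
    induction h with
    | refl => exact Iff.rfl
    | tail _ hstep' ih => exact ih.trans (hadj _ _ hstep')
  intro hreach
  have hrB : r ∈ B := (hcl _ _ hreach).mp ⟨0, rfl⟩
  obtain ⟨i, hi⟩ := hrB
  rw [Function.iterate_fixed (fstep_root hT)] at hi
  exact hv hi.symm

lemma S_eq_canonical (hT : D.IsOrientedSpanningTreeRev T S r) :
    S = {e | e ∈ T ∧ ¬ D.Reach (T \ {e}) (D.last e) r} := by
  ext e
  constructor
  · intro hs
    have he : e ∈ T := hT.2.1 hs
    refine ⟨he, ?_⟩
    have := not_reach_tl hT he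
    rwa [tlS, if_pos hs] at this
  · rintro ⟨he, hnr⟩
    by_contra hs
    have := reach_hd hT he
    rw [hdS, if_neg hs] at this
    exact hnr this

lemma rev_set_unique {S' : Set D.E} (hT : D.IsOrientedSpanningTreeRev T S r)
    (hT' : D.IsOrientedSpanningTreeRev T S' r) : S = S' := by
  rw [S_eq_canonical hT, S_eq_canonical hT']

end OST

/-- Every spanning tree admits an orientation towards any root. -/
lemma exists_orientation {T : Set D.E} (r : D.V) (hsp : D.IsSpanningTree T) :
    ∃ S, D.IsOrientedSpanningTreeRev T S r := by
  classical
  have hcf := hsp.cycleFree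
  set S : Set D.E := {e | e ∈ T ∧ ¬ D.Reach (T \ {e}) (D.last e) r} with hSdef
  have hSsub : S ⊆ T := fun e he => he.1
  have hTins : ∀ e ∈ T, T = insert e (T \ {e}) := by
    intro e he
    rw [Set.insert_diff_singleton, Set.insert_eq_self.mpr he]
  have hnotboth : ∀ e ∈ T, ¬ (D.Reach (T \ {e}) (D.first e) r ∧ D.Reach (T \ {e}) (D.last e) r) := by
    rintro e he ⟨hf, hl⟩
    exact hcf e he (hf.trans' hl.symm')
  have hor : ∀ e ∈ T, D.Reach (T \ {e}) (D.first e) r ∨ D.Reach (T \ {e}) (D.last e) r := by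
    intro e he
    have hfr : D.Reach T (D.first e) r := hsp.1 _ _
    rw [hTins e he] at hfr
    rcases reach_insert_iff.mp hfr with h' | ⟨h1, h2⟩ | ⟨h1, h2⟩
    · exact Or.inl h'
    · exact Or.inr h2
    · exact absurd h1 (hcf e he)
  have htl_not : ∀ e ∈ T, ¬ D.Reach (T \ {e}) (D.tlS S e) r := by
    intro e he
    by_cases hs : e ∈ S
    · rw [tlS, if_pos hs]; exact hs.2
    · rw [tlS, if_neg hs]
      have hl : D.Reach (T \ {e}) (D.last e) r := by
        by_contra h
        exact hs ⟨he, h⟩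
      intro hf
      exact hnotboth e he ⟨hf, hl⟩
  have hhd_reach : ∀ e ∈ T, D.Reach (T \ {e}) (D.hdS S e) r := by
    intro e he
    by_cases hs : e ∈ S
    · rw [hdS, if_pos hs]
      rcases hor e he with h | h
      · exact h
      · exact absurd h hs.2
    · rw [hdS, if_neg hs]
      by_contra h
      exact hs ⟨he, h⟩
  have htl_ne_r : ∀ e ∈ T, D.tlS S e ≠ r := by
    intro e he h
    exact htl_not e he (h ▸ D.reach_refl _ _)
  -- injectivity of the tail map
  have hinj : ∀ e ∈ T, ∀ e' ∈ T, D.tlS S e = D.tlS S e' → e = e' := by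
    intro e he e' he' htt
    by_contra hne
    have hne' : e' ≠ e := fun h => hne h.symm
    have F1 : ¬ D.Reach (T \ {e}) (D.tlS S e) r := htl_not e he
    have F3 : ¬ D.Reach (T \ {e'}) (D.tlS S e) r := by
      rw [htt]; exact htl_not e' he'
    have F4 : D.Reach (T \ {e'}) (D.hdS S e') r := hhd_reach e' he'
    set U := T \ {e, e'} with hUdef
    have hTe' : T \ {e'} = insert e U := by
      ext x
      simp only [hUdef, Set.mem_diff, Set.mem_insert_iff, Set.mem_singleton_iff]
      constructor
      · rintro ⟨hx, hxe'⟩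
        by_cases hxe : x = e
        · exact Or.inl hxe
        · exact Or.inr ⟨hx, by tauto⟩
      · rintro (rfl | ⟨hx, hxx⟩)
        · exact ⟨he, hne⟩
        · exact ⟨hx, by tauto⟩
    have hUsube : U ⊆ T \ {e} := fun x ⟨hx, hxx⟩ =>
      ⟨hx, by simp only [Set.mem_insert_iff, Set.mem_singleton_iff] at hxx; tauto⟩
    have hUsube' : U ⊆ T \ {e'} := fun x ⟨hx, hxx⟩ =>
      ⟨hx, by simp only [Set.mem_insert_iff, Set.mem_singleton_iff] at hxx; tauto⟩
    have hadj_e'_in_Te : D.Adj (T \ {e}) (D.tlS S e) (D.hdS S e') := by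
      rw [htt]
      exact adj_tl_hd ⟨he', hne'⟩
    have hadj_e_in_Te' : D.Adj (T \ {e'}) (D.tlS S e) (D.hdS S e) :=
      adj_tl_hd ⟨he, hne⟩
    rw [hTe'] at F4
    -- decompose F4
    have hfl : (D.first e = D.tlS S e ∧ D.last e = D.hdS S e) ∨
        (D.last e = D.tlS S e ∧ D.first e = D.hdS S e) := by
      by_cases hs : e ∈ S
      · right; rw [tlS, hdS, if_pos hs, if_pos hs]; exact ⟨rfl, rfl⟩
      · left; rw [tlS, hdS, if_neg hs, if_neg hs]; exact ⟨rfl, rfl⟩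
    rcases reach_insert_iff.mp F4 with h' | ⟨h1, h2⟩ | ⟨h1, h2⟩
    · -- hd e' reaches r avoiding both: then v reaches r in T \ {e}
      exact F1 (hadj_e'_in_Te.reach.trans' (h'.mono' hUsube))
    · -- Reach U (hd e') (first e) ∧ Reach U (last e) r
      rcases hfl with ⟨hfv, hlh⟩ | ⟨hlv, hfh⟩
      · -- first e = v : Reach U (last e) r with last e = hd e  ⇒ v reaches r in T \ {e'}
        rw [hlh] at h2
        exact F3 (hadj_e_in_Te'.reach.trans' (h2.mono' hUsube'))
      · -- last e = v : Reach U v r  ⇒ contradiction with F1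
        rw [hlv] at h2
        exact F1 (h2.mono' hUsube)
    · -- Reach U (hd e') (last e) ∧ Reach U (first e) r
      rcases hfl with ⟨hfv, hlh⟩ | ⟨hlv, hfh⟩
      · rw [hfv] at h2
        exact F1 (h2.mono' hUsube)
      · rw [hfh] at h2
        exact F3 (hadj_e_in_Te'.reach.trans' (h2.mono' hUsube'))
  -- cardinality: the tail map is bijective onto the non-root vertices
  have hne : Nonempty D.V := ⟨r⟩
  have hcardT : Nat.card ↥T = Nat.card D.V - 1 := hsp.2
  let F : ↥T → {v : D.V // v ≠ r} := fun x => ⟨D.tlS S x.1, htl_ne_r x.1 x.2⟩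
  have hFinj : Function.Injective F := by
    rintro ⟨x, hx⟩ ⟨y, hy⟩ hxy
    exact Subtype.ext (hinj x hx y hy (congrArg Subtype.val hxy))
  have hFbij : Function.Bijective F := by
    rw [Nat.bijective_iff_injective_and_card]
    exact ⟨hFinj, by rw [nat_card_subtype_ne, hcardT]⟩
  refine ⟨S, hsp, hSsub, ?_, ?_⟩
  · intro v hv
    rw [outdegRev_eq_card hSsub]
    apply nat_card_eq_one_of_existsUnique
    obtain ⟨⟨e, he⟩, hFe⟩ := hFbij.2 ⟨v, hv⟩
    refine ⟨e, ⟨he, congrArg Subtype.val hFe⟩, ?_⟩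
    rintro e' ⟨he', htl'⟩
    exact hinj e' he' e he (htl'.trans (congrArg Subtype.val hFe).symm)
  · rw [outdegRev_eq_card hSsub]
    apply nat_card_eq_zero_of_forall_not
    rintro e ⟨he, htl⟩
    exact htl_ne_r e he htl

end Multidigraph
end Aux3

section Aux4
namespace Multidigraph

variable {D : Multidigraph}

/-- Shorthand for the quotient map of a contraction. -/
noncomputable abbrev cmk (E' : Set D.E) (v : D.V) : (D.contract E').V :=
  Quotient.mk (Relation.EqvGen.setoid (D.contractRel E')) v

lemma cmk_eq_iff {E' : Set D.E} {a b : D.V} : cmk E' a = cmk E' b ↔ D.Reach E' a b :=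
  qmk_eq_iff

lemma contract_card_V {E' : Set D.E} (hE : D.CycleFree E') :
    Nat.card (D.contract E').V = Nat.card D.V - E'.ncard := by
  have h := comp_add_ncard_of_cycleFree hE
  have h2 : Nat.card (D.contract E').V = D.comp E' := rfl
  omega

lemma contract_surjective {E' : Set D.E} (x : (D.contract E').V) : ∃ v, cmk E' v = x := by
  induction x using Quotient.ind
  exact ⟨_, rfl⟩

lemma reach_project {E' W : Set D.E} {a b : D.V} (h : D.Reach W a b) :
    (D.contract E').Reach {e' : (D.contract E').E | e'.1 ∈ W} (cmk E' a) (cmk E' b) := by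
  induction h with
  | refl => exact reach_refl _ _
  | @tail m t _ hadj ih =>
    obtain ⟨e, heW, hor⟩ := hadj
    by_cases heE : e ∈ E'
    · have hmt : cmk E' m = cmk E' t := by
        rw [cmk_eq_iff]
        rcases hor with ⟨h1, h2⟩ | ⟨h1, h2⟩
        · exact (Adj.reach ⟨e, heE, Or.inl ⟨h1, h2⟩⟩)
        · exact (Adj.reach ⟨e, heE, Or.inr ⟨h1, h2⟩⟩)
      rwa [hmt] at ih
    · refine ih.trans' (Adj.reach ⟨⟨e, heE⟩, heW, ?_⟩)
      rcases hor with ⟨h1, h2⟩ | ⟨h1, h2⟩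
      · exact Or.inl ⟨congrArg (cmk E') h1, congrArg (cmk E') h2⟩
      · exact Or.inr ⟨congrArg (cmk E') h1, congrArg (cmk E') h2⟩

lemma reach_lift {E' W : Set D.E} {x y : (D.contract E').V}
    (h : (D.contract E').Reach {e' : (D.contract E').E | e'.1 ∈ W} x y) :
    ∀ a b : D.V, cmk E' a = x → cmk E' b = y → D.Reach (W ∪ E') a b := by
  induction h with
  | refl =>
    intro a b ha hb
    have : D.Reach E' a b := cmk_eq_iff.mp (ha.trans hb.symm)
    exact this.mono' Set.subset_union_right
  | @tail c d _ hadj ih =>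
    intro a b ha hb
    obtain ⟨e', he'W, hor⟩ := hadj
    have hstep : D.Adj (W ∪ E') (D.first e'.1) (D.last e'.1) :=
      ⟨e'.1, Or.inl he'W, Or.inl ⟨rfl, rfl⟩⟩
    have hfst : (D.contract E').first e' = cmk E' (D.first e'.1) := rfl
    have hlst : (D.contract E').last e' = cmk E' (D.last e'.1) := rfl
    rw [hfst, hlst] at hor
    rcases hor with ⟨h1, h2⟩ | ⟨h1, h2⟩
    · have r1 : D.Reach (W ∪ E') a (D.first e'.1) := ih a _ ha h1
      have r2 : D.Reach (W ∪ E') (D.last e'.1) b :=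
        (cmk_eq_iff.mp (h2.trans hb.symm)).mono' Set.subset_union_right
      exact (r1.trans' hstep.reach).trans' r2
    · have r1 : D.Reach (W ∪ E') a (D.last e'.1) := ih a _ ha h2
      have r2 : D.Reach (W ∪ E') (D.first e'.1) b :=
        (cmk_eq_iff.mp (h1.trans hb.symm)).mono' Set.subset_union_right
      exact (r1.trans' hstep.reach.symm').trans' r2

lemma ncard_pi {E' W : Set D.E} :
    ({e' : (D.contract E').E | e'.1 ∈ W}).ncard = (W \ E').ncard := by
  rw [← Nat.card_coe_set_eq, ← Nat.card_coe_set_eq]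
  apply Nat.card_congr
  refine ⟨fun x => ⟨x.1.1, x.2, x.1.2⟩, fun x => ⟨⟨x.1, x.2.2⟩, x.2.1⟩, ?_, ?_⟩
  · rintro ⟨⟨e, he⟩, hw⟩; rfl
  · rintro ⟨e, hw, he⟩; rfl

lemma kst_zero {T : Set D.E} {x : D.V} :
    D.IsKSpanningTree T x 0 ↔ D.IsOrientedSpanningTreeRev T ∅ x := by
  constructor
  · rintro ⟨S, hS0, hT⟩
    have : S = ∅ := by
      rw [Nat.card_coe_set_eq] at hS0
      exact (Set.ncard_eq_zero (Set.toFinite S)).mp hS0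
    rwa [this] at hT
  · intro h
    exact ⟨∅, by simp, h⟩

end Multidigraph
end Aux4

section Aux5
namespace Multidigraph

variable {D : Multidigraph} {T S E' : Set D.E} {r : D.V}

lemma contract_ost (hT : D.IsOrientedSpanningTreeRev T S r) (hSE' : S ⊆ E') (hE'T : E' ⊆ T) :
    (D.contract E').IsOrientedSpanningTreeRev
      {e' : (D.contract E').E | e'.1 ∈ T} ∅ (cmk E' r) := by
  classical
  have hre := fstep_reaches hT
  have hcfT := hT.1.cycleFree
  have hcfE' : D.CycleFree E' := cycleFree_mono hcfT hE'T
  set Stb : D.V → Prop := fun v => v = r ∨ ¬ ∃ e, e ∈ E' ∧ D.tlS S e = v with hStb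
  set g : D.V → D.V := fun v => if Stb v then v else D.fstep T S v with hgdef
  have hg_stable : ∀ v, Stb v → g v = v := by
    intro v hv; simp only [hgdef, if_pos hv]
  have hg_not : ∀ v, ¬ Stb v → g v = D.fstep T S v := by
    intro v hv; simp only [hgdef, if_neg hv]
  have hfstep_mem : ∀ e ∈ E', D.fstep T S (D.tlS S e) = D.hdS S e :=
    fun e he => fstep_spec hT (hE'T he)
  set top : D.V → D.V := fun v => g^[rk hre v] v with htop
  have htop_fix : ∀ v, Stb v → top v = v := by
    intro v hv
    simp only [htop]
    exact Function.iterate_fixed (hg_stable v hv) _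
  have htop_g : ∀ v, ¬ Stb v → top v = top (D.fstep T S v) := by
    intro v hv
    have hvr : v ≠ r := fun h => hv (Or.inl h)
    have hrkf : rk hre (D.fstep T S v) + 1 = rk hre v := rk_fstep hre hvr
    simp only [htop]
    rw [show rk hre v = rk hre (D.fstep T S v) + 1 by omega,
      Function.iterate_succ_apply, hg_not v hv]
  have main : ∀ n v, rk hre v ≤ n → Stb (top v) ∧ D.Reach E' v (top v) := by
    intro n
    induction n with
    | zero =>
      intro v hv
      have hvr : v = r := (rk_eq_zero_iff hre).mp (Nat.le_zero.mp hv)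
      have hstb : Stb v := Or.inl hvr
      rw [htop_fix v hstb]
      exact ⟨hstb, D.reach_refl _ _⟩
    | succ n ih =>
      intro v hv
      by_cases hs : Stb v
      · rw [htop_fix v hs]; exact ⟨hs, D.reach_refl _ _⟩
      · have hvr : v ≠ r := fun h => hs (Or.inl h)
        have hex : ∃ e, e ∈ E' ∧ D.tlS S e = v := by
          simp only [hStb] at hs
          push_neg at hs
          exact hs.2
        obtain ⟨e, heE, htl⟩ := hex
        have hrkf : rk hre (D.fstep T S v) + 1 = rk hre v := rk_fstep hre hvr
        have hle : rk hre (D.fstep T S v) ≤ n := by omega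
        have hih := ih (D.fstep T S v) hle
        have hadj' : D.Adj E' v (D.fstep T S v) := by
          rw [← htl, hfstep_mem e heE]
          exact adj_tl_hd heE
        rw [htop_g v hs]
        exact ⟨hih.1, hadj'.reach.trans' hih.2⟩
  have htop_stable : ∀ v, Stb (top v) := fun v => (main _ v (le_refl _)).1
  have htop_reach : ∀ v, D.Reach E' v (top v) := fun v => (main _ v (le_refl _)).2
  have htop_cong : ∀ a b, D.Reach E' a b → top a = top b := by
    intro a b h
    induction h with
    | refl => rfl
    | tail _ hadj ih =>
      refine ih.trans ?_
      obtain ⟨e, heE, hor⟩ := hadj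
      have hkey : top (D.tlS S e) = top (D.hdS S e) := by
        have hns : ¬ Stb (D.tlS S e) := by
          rintro (h | h)
          · exact no_out_root hT (hE'T heE) h
          · exact h ⟨e, heE, rfl⟩
        rw [htop_g _ hns, hfstep_mem e heE]
      have hfl : (D.first e = D.tlS S e ∧ D.last e = D.hdS S e) ∨
          (D.last e = D.tlS S e ∧ D.first e = D.hdS S e) := by
        by_cases hs2 : e ∈ S
        · right; rw [tlS, hdS, if_pos hs2, if_pos hs2]; exact ⟨rfl, rfl⟩
        · left; rw [tlS, hdS, if_neg hs2, if_neg hs2]; exact ⟨rfl, rfl⟩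
      rcases hor with ⟨h1, h2⟩ | ⟨h1, h2⟩ <;> subst h1 <;> subst h2 <;>
        rcases hfl with ⟨hf1, hf2⟩ | ⟨hf1, hf2⟩ <;> rw [hf1, hf2]
      exacts [hkey, hkey.symm, hkey.symm, hkey]
  have htop_r : top r = r := htop_fix r (Or.inl rfl)
  -- assemble
  have hne : Nonempty D.V := ⟨r⟩
  refine ⟨⟨?_, ?_⟩, Set.empty_subset _, ?_, ?_⟩
  · -- spanning reach
    intro x y
    obtain ⟨a, rfl⟩ := contract_surjective x
    obtain ⟨b, rfl⟩ := contract_surjective y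
    exact reach_project (hT.1.1 a b)
  · -- cardinality
    rw [Nat.card_coe_set_eq, ncard_pi, contract_card_V hcfE']
    have h1 : (T \ E').ncard = T.ncard - E'.ncard := Set.ncard_diff hE'T (Set.toFinite E')
    have h2 : T.ncard = Nat.card D.V - 1 := by
      rw [← Nat.card_coe_set_eq]; exact hT.1.2
    have h3 : E'.ncard ≤ T.ncard := Set.ncard_le_ncard hE'T (Set.toFinite T)
    have h4 : 0 < Nat.card D.V := Nat.card_pos
    omega
  · -- outdegree one
    intro x hx
    obtain ⟨w, rfl⟩ := contract_surjective x
    rw [outdegRev_eq_card (Set.empty_subset _)]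
    apply nat_card_eq_one_of_existsUnique
    have hur : top w ≠ r := by
      intro h
      apply hx
      rw [← h]
      exact cmk_eq_iff.mpr (htop_reach w)
    have hnoE' : ¬ ∃ e, e ∈ E' ∧ D.tlS S e = top w := by
      rcases htop_stable w with h | h
      · exact absurd h hur
      · exact h
    obtain ⟨e₀, ⟨he₀T, htl₀⟩, huniq⟩ := exists_unique_out hT hur
    have he₀E : e₀ ∉ E' := fun h => hnoE' ⟨e₀, h, htl₀⟩
    have he₀S : e₀ ∉ S := fun h => he₀E (hSE' h)
    have hfirst₀ : D.first e₀ = top w := by rw [← htl₀, tlS, if_neg he₀S]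
    refine ⟨⟨e₀, he₀E⟩, ⟨he₀T, ?_⟩, ?_⟩
    · simp only [tlS]; split_ifs with hc
      · exact absurd hc (Set.notMem_empty _)
      show cmk E' (D.first e₀) = cmk E' w
      rw [hfirst₀]
      exact (cmk_eq_iff.mpr (htop_reach w)).symm
    · rintro ⟨e₁, he₁E⟩ ⟨he₁T, htl₁⟩
      simp only [tlS] at htl₁; split_ifs at htl₁ with hc
      · exact absurd hc (Set.notMem_empty _)
      have he₁S : e₁ ∉ S := fun h => he₁E (hSE' h)
      have htl₁' : D.tlS S e₁ = D.first e₁ := by rw [tlS, if_neg he₁S]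
      have hv₁r : D.tlS S e₁ ≠ r := no_out_root hT he₁T
      have hstb₁ : Stb (D.tlS S e₁) := by
        right
        rintro ⟨e₂, he₂E, htl₂⟩
        obtain ⟨e₃, _, hu₃⟩ := exists_unique_out hT hv₁r
        have h13 := hu₃ e₁ ⟨he₁T, rfl⟩
        have h23 := hu₃ e₂ ⟨hE'T he₂E, htl₂⟩
        exact he₁E (by rw [h13, ← h23]; exact he₂E)
      have hreach₁ : D.Reach E' (D.tlS S e₁) w := by
        apply cmk_eq_iff.mp
        rw [htl₁']
        exact htl₁
      have heq₁ : D.tlS S e₁ = top w := by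
        rw [← htop_fix _ hstb₁, htop_cong _ _ hreach₁]
      apply Subtype.ext
      exact huniq e₁ ⟨he₁T, heq₁⟩
  · -- outdegree of root is zero
    rw [outdegRev_eq_card (Set.empty_subset _)]
    apply nat_card_eq_zero_of_forall_not
    rintro ⟨e₁, he₁E⟩ ⟨he₁T, htl₁⟩
    simp only [tlS] at htl₁; split_ifs at htl₁ with hc
    · exact absurd hc (Set.notMem_empty _)
    have he₁S : e₁ ∉ S := fun h => he₁E (hSE' h)
    have htl₁' : D.tlS S e₁ = D.first e₁ := by rw [tlS, if_neg he₁S]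
    have hv₁r : D.tlS S e₁ ≠ r := no_out_root hT he₁T
    have hstb₁ : Stb (D.tlS S e₁) := by
      right
      rintro ⟨e₂, he₂E, htl₂⟩
      obtain ⟨e₃, _, hu₃⟩ := exists_unique_out hT hv₁r
      have h13 := hu₃ e₁ ⟨he₁T, rfl⟩
      have h23 := hu₃ e₂ ⟨hE'T he₂E, htl₂⟩
      exact he₁E (by rw [h13, ← h23]; exact he₂E)
    have hreach₁ : D.Reach E' (D.tlS S e₁) r := by
      apply cmk_eq_iff.mp
      rw [htl₁']
      exact htl₁
    apply hv₁r
    rw [← htop_fix _ hstb₁, htop_cong _ _ hreach₁, htop_r]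

end Multidigraph
end Aux5

section Aux6
namespace Multidigraph

variable {D : Multidigraph} {E' : Set D.E} {r : D.V}

lemma ost_of_contract (hE : D.CycleFree E') {T'' : Set (D.contract E').E}
    (h : (D.contract E').IsOrientedSpanningTreeRev T'' ∅ (cmk E' r)) :
    ∃ S, D.IsOrientedSpanningTreeRev (E' ∪ Subtype.val '' T'') S r ∧ S ⊆ E' := by
  classical
  set W : Set D.E := Subtype.val '' T'' with hW
  have hWE' : ∀ x ∈ W, x ∉ E' := by
    rintro x ⟨⟨y, hy⟩, _, rfl⟩
    exact hy
  have hπ : {e' : (D.contract E').E | e'.1 ∈ W} = T'' := by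
    ext ⟨e, he⟩
    constructor
    · rintro ⟨⟨y, hy⟩, hyT, hyv⟩
      have : (⟨y, hy⟩ : (D.contract E').E) = ⟨e, he⟩ := Subtype.ext hyv
      rwa [← this]
    · intro hmem
      exact ⟨⟨e, he⟩, hmem, rfl⟩
  have hsp : D.IsSpanningTree (E' ∪ W) := by
    constructor
    · intro a b
      have := h.1.1 (cmk E' a) (cmk E' b)
      rw [← hπ] at this
      have := reach_lift this a b rfl rfl
      rwa [Set.union_comm] at this
    · rw [Nat.card_coe_set_eq]
      have hdisj : Disjoint E' W := Set.disjoint_left.mpr (fun x hx hxW => hWE' x hxW hx)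
      rw [Set.ncard_union_eq hdisj (Set.toFinite E') (Set.toFinite W)]
      have h1 : W.ncard = Nat.card ↥T'' := by
        rw [hW, ← Nat.card_coe_set_eq]
        exact Nat.card_congr (Equiv.Set.image (Subtype.val : (D.contract E').E → D.E) T''
          Subtype.val_injective).symm
      have h2 : Nat.card ↥T'' = Nat.card (D.contract E').V - 1 := h.1.2
      have h3 : Nat.card (D.contract E').V = Nat.card D.V - E'.ncard := contract_card_V hE
      have h4 : 0 < Nat.card (D.contract E').V := by
        have : Nonempty (D.contract E').V := ⟨cmk E' r⟩
        exact Nat.card_pos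
      have h5 : 0 < Nat.card D.V := by
        have : Nonempty D.V := ⟨r⟩
        exact Nat.card_pos
      omega
  obtain ⟨S₀, hS₀⟩ := exists_orientation r hsp
  refine ⟨S₀, hS₀, ?_⟩
  intro e heS₀
  by_contra hne
  have heT : e ∈ E' ∪ W := hS₀.2.1 heS₀
  have heW : e ∈ W := heT.resolve_left hne
  have he' : (⟨e, hne⟩ : (D.contract E').E) ∈ T'' := by
    rw [← hπ]; exact heW
  -- in the contraction, the last endpoint of e reaches the root avoiding e
  have hreach' := reach_hd h he'
  have hd_eq : (D.contract E').hdS ∅ ⟨e, hne⟩ = cmk E' (D.last e) := by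
    simp only [hdS]; split_ifs with hc
    · exact absurd hc (Set.notMem_empty _)
    rfl
  rw [hd_eq] at hreach'
  have hset : T'' \ {⟨e, hne⟩} = {x : (D.contract E').E | x.1 ∈ W \ {e}} := by
    ext ⟨y, hy⟩
    simp only [Set.mem_diff, Set.mem_singleton_iff, Set.mem_setOf_eq]
    constructor
    · rintro ⟨hyT, hyne⟩
      refine ⟨by rw [← hπ] at hyT; exact hyT, ?_⟩
      intro hye
      exact hyne (Subtype.ext hye)
    · rintro ⟨hyW, hyne⟩
      refine ⟨by rw [← hπ]; exact hyW, ?_⟩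
      intro hcon
      exact hyne (congrArg Subtype.val hcon)
  rw [hset] at hreach'
  have hlift := reach_lift hreach' (D.last e) r rfl rfl
  -- (W \ {e}) ∪ E' ⊆ (E' ∪ W) \ {e}
  have hsub : (W \ {e}) ∪ E' ⊆ (E' ∪ W) \ {e} := by
    rintro x (⟨hxW, hxe⟩ | hxE)
    · exact ⟨Or.inr hxW, hxe⟩
    · refine ⟨Or.inl hxE, ?_⟩
      intro hxe
      rw [Set.mem_singleton_iff] at hxe
      subst hxe
      exact hne hxE
  have hlast : D.Reach ((E' ∪ W) \ {e}) (D.last e) r := hlift.mono' hsub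
  -- but e ∈ S₀ means the last endpoint does not reach the root
  have := S_eq_canonical hS₀
  rw [this] at heS₀
  exact heS₀.2 hlast

/-- The count `c₀(D/E', r)` equals the number of spanning trees of `D`
containing `E'` whose reversal set is contained in `E'`. -/
lemma c0_contract_eq (hE : D.CycleFree E') (r : D.V) :
    (D.contract E').c 0 (cmk E' r) =
      Nat.card {T : Set D.E // ∃ S, D.IsOrientedSpanningTreeRev T S r ∧ S ⊆ E' ∧ E' ⊆ T} := by
  classical
  rw [c]
  rw [Nat.card_congr (Equiv.subtypeEquivRight (fun T'' => @kst_zero (D.contract E') T'' (cmk E' r)))]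
  apply Nat.card_congr
  refine ⟨?_, ?_, ?_, ?_⟩
  · rintro ⟨T'', hT''⟩
    refine ⟨E' ∪ Subtype.val '' T'', ?_⟩
    obtain ⟨S₀, hS₀, hsub⟩ := ost_of_contract hE hT''
    exact ⟨S₀, hS₀, hsub, Set.subset_union_left⟩
  · rintro ⟨T, hT⟩
    refine ⟨{e' : (D.contract E').E | e'.1 ∈ T}, ?_⟩
    obtain ⟨S, hS, hSE', hE'T⟩ := hT
    exact contract_ost hS hSE' hE'T
  · rintro ⟨T'', hT''⟩
    apply Subtype.ext
    show {e' : (D.contract E').E | e'.1 ∈ E' ∪ Subtype.val '' T''} = T''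
    ext ⟨e, he⟩
    simp only [Set.mem_setOf_eq, Set.mem_union]
    constructor
    · rintro (hE' | ⟨⟨y, hy⟩, hyT, hyv⟩)
      · exact absurd hE' he
      · have : (⟨y, hy⟩ : (D.contract E').E) = ⟨e, he⟩ := Subtype.ext hyv
        rwa [← this]
    · intro hmem
      exact Or.inr ⟨⟨e, he⟩, hmem, rfl⟩
  · rintro ⟨T, hT⟩
    apply Subtype.ext
    show E' ∪ Subtype.val '' {e' : (D.contract E').E | e'.1 ∈ T} = T
    obtain ⟨S, hS, hSE', hE'T⟩ := hT
    ext x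
    simp only [Set.mem_union, Set.mem_image, Set.mem_setOf_eq]
    constructor
    · rintro (hx | ⟨⟨y, hy⟩, hyT, rfl⟩)
      · exact hE'T hx
      · exact hyT
    · intro hx
      by_cases hxE : x ∈ E'
      · exact Or.inl hxE
      · exact Or.inr ⟨⟨x, hxE⟩, hx, rfl⟩

end Multidigraph
end Aux6

section Aux7
namespace Multidigraph

variable {D : Multidigraph}

lemma c_eq_filter (k : ℕ) (r : D.V) :
    D.c k r = (Finset.univ.filter fun T : Set D.E => D.IsKSpanningTree T r k).card := by
  classical
  show Nat.card {T : Set D.E // D.IsKSpanningTree T r k} = _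
  rw [Nat.card_eq_fintype_card, Fintype.card_subtype]

lemma c_eq_zero (r : D.V) {k : ℕ} (hk : Nat.card D.V - 1 < k) : D.c k r = 0 := by
  have hall : ∀ T : Set D.E, ¬ D.IsKSpanningTree T r k := by
    rintro T ⟨S, hcard, hOST⟩
    have h1 : S.ncard ≤ T.ncard := Set.ncard_le_ncard hOST.2.1 (Set.toFinite T)
    have h2 : T.ncard = Nat.card D.V - 1 := by
      rw [← Nat.card_coe_set_eq]; exact hOST.1.2
    rw [Nat.card_coe_set_eq] at hcard
    omega
  show Nat.card {T : Set D.E // D.IsKSpanningTree T r k} = 0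
  exact nat_card_eq_zero_of_forall_not hall

lemma count_between {S T : Set D.E} (hST : S ⊆ T) {j : ℕ} (hj : S.ncard ≤ j) :
    (Finset.univ.filter fun E'' : Set D.E => S ⊆ E'' ∧ E'' ⊆ T ∧ E''.ncard = j).card
      = (T.ncard - S.ncard).choose (j - S.ncard) := by
  classical
  have h1 : (T \ S).toFinset.card = T.ncard - S.ncard := by
    rw [← Set.ncard_eq_toFinset_card', Set.ncard_diff hST]
  rw [← h1, ← Finset.card_powersetCard]
  apply Finset.card_bij (fun (E'' : Set D.E) _ => (E'' \ S).toFinset)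
  · intro E'' hE''
    rw [Finset.mem_filter] at hE''
    obtain ⟨_, hSE, hET, hcard⟩ := hE''
    rw [Finset.mem_powersetCard]
    constructor
    · rw [Set.toFinset_subset_toFinset]
      exact Set.diff_subset_diff_left hET
    · rw [← Set.ncard_eq_toFinset_card', Set.ncard_diff hSE, hcard]
  · intro E₁ h₁ E₂ h₂ heq
    rw [Finset.mem_filter] at h₁ h₂
    have : E₁ \ S = E₂ \ S := by rwa [Set.toFinset_inj] at heq
    rw [← Set.union_diff_cancel h₁.2.1, ← Set.union_diff_cancel h₂.2.1, this]
  · intro A hA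
    rw [Finset.mem_powersetCard] at hA
    obtain ⟨hsub, hcard⟩ := hA
    have hAsub : (↑A : Set D.E) ⊆ T \ S := by
      intro x hx
      have := hsub (by rwa [Finset.mem_coe] at hx)
      rwa [Set.mem_toFinset] at this
    have hdisj : Disjoint S (↑A : Set D.E) :=
      Set.disjoint_left.mpr (fun x hx hxA => (hAsub hxA).2 hx)
    refine ⟨S ∪ ↑A, Finset.mem_filter.mpr ⟨Finset.mem_univ _, Set.subset_union_left, ?_, ?_⟩, ?_⟩
    · rintro x (hx | hx)
      · exact hST hx
      · exact (hAsub hx).1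
    · rw [Set.ncard_union_eq hdisj (Set.toFinite S) (Set.toFinite _),
        Set.ncard_coe_finset, hcard]
      omega
    · have hsets : (S ∪ ↑A) \ S = (↑A : Set D.E) :=
        Set.union_diff_cancel_left (by rw [Set.disjoint_iff] at hdisj; exact hdisj)
      apply Finset.coe_injective
      rw [Set.coe_toFinset, hsets]

lemma count_between_zero {S T : Set D.E} {j : ℕ} (hj : j < S.ncard) :
    (Finset.univ.filter fun E'' : Set D.E => S ⊆ E'' ∧ E'' ⊆ T ∧ E''.ncard = j).card = 0 := by
  classical
  rw [Finset.card_eq_zero, Finset.filter_eq_empty_iff]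
  rintro E'' _ ⟨hSE, _, hcard⟩
  have := Set.ncard_le_ncard hSE (Set.toFinite E'')
  omega

lemma N_eq (r : D.V) (j : ℕ) :
    (∑ E' : Set D.E, if D.CycleFree E' ∧ E'.ncard = j
        then (D.contract E').c 0 (cmk E' r) else 0)
      = ∑ k ∈ Finset.range (j + 1), (Nat.card D.V - 1 - k).choose (j - k) * D.c k r := by
  classical
  have hstep1 : ∀ E' : Set D.E,
      (if D.CycleFree E' ∧ E'.ncard = j then (D.contract E').c 0 (cmk E' r) else 0)
        = ∑ T : Set D.E, (if (D.CycleFree E' ∧ E'.ncard = j) ∧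
            (∃ S, D.IsOrientedSpanningTreeRev T S r ∧ S ⊆ E' ∧ E' ⊆ T) then 1 else 0) := by
    intro E'
    by_cases h : D.CycleFree E' ∧ E'.ncard = j
    · rw [if_pos h, c0_contract_eq h.1 r, Nat.card_eq_fintype_card, Fintype.card_subtype,
        Finset.card_filter]
      apply Finset.sum_congr rfl
      intro T _
      by_cases hp : ∃ S, D.IsOrientedSpanningTreeRev T S r ∧ S ⊆ E' ∧ E' ⊆ T
      · rw [if_pos hp, if_pos ⟨h, hp⟩]
      · rw [if_neg hp, if_neg (fun hc => hp hc.2)]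
    · rw [if_neg h]
      symm
      apply Finset.sum_eq_zero
      intro T _
      rw [if_neg (fun hc => h hc.1)]
  rw [Finset.sum_congr rfl (fun E' _ => hstep1 E'), Finset.sum_comm]
  have hstep3 : ∀ T : Set D.E,
      (∑ E' : Set D.E, if (D.CycleFree E' ∧ E'.ncard = j) ∧
          (∃ S, D.IsOrientedSpanningTreeRev T S r ∧ S ⊆ E' ∧ E' ⊆ T) then 1 else 0)
        = ∑ k ∈ Finset.range (j + 1),
            (if D.IsKSpanningTree T r k then (Nat.card D.V - 1 - k).choose (j - k) else 0) := by
    intro T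
    by_cases hex : ∃ S, D.IsOrientedSpanningTreeRev T S r
    · obtain ⟨S, hS⟩ := hex
      have hcond : ∀ E' : Set D.E,
          (((D.CycleFree E' ∧ E'.ncard = j) ∧
            (∃ S', D.IsOrientedSpanningTreeRev T S' r ∧ S' ⊆ E' ∧ E' ⊆ T))
          ↔ (S ⊆ E' ∧ E' ⊆ T ∧ E'.ncard = j)) := by
        intro E'
        constructor
        · rintro ⟨⟨hcf, hcard⟩, S', hS', hSE', hE'T⟩
          have hSS : S' = S := rev_set_unique hS' hS
          exact ⟨hSS ▸ hSE', hE'T, hcard⟩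
        · rintro ⟨h1, h2, h3⟩
          exact ⟨⟨cycleFree_mono hS.1.cycleFree h2, h3⟩, S, hS, h1, h2⟩
      rw [Finset.sum_congr rfl (fun E' _ => by rw [if_congr (hcond E') rfl rfl]),
        ← Finset.card_filter]
      have hSsubT : S ⊆ T := hS.2.1
      have hTcard : T.ncard = Nat.card D.V - 1 := by
        rw [← Nat.card_coe_set_eq]; exact hS.1.2
      have hkst : ∀ k, D.IsKSpanningTree T r k ↔ k = S.ncard := by
        intro k
        constructor
        · rintro ⟨S', hS'card, hS'⟩
          rw [← hS'card, Nat.card_coe_set_eq, rev_set_unique hS' hS]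
        · rintro rfl
          exact ⟨S, by rw [Nat.card_coe_set_eq], hS⟩
      rw [Finset.sum_congr rfl (fun k _ => by rw [if_congr (hkst k) rfl rfl]),
        Finset.sum_ite_eq' (Finset.range (j + 1)) S.ncard
          (fun k => (Nat.card D.V - 1 - k).choose (j - k))]
      by_cases hk₀j : S.ncard ∈ Finset.range (j + 1)
      · rw [if_pos hk₀j]
        rw [Finset.mem_range] at hk₀j
        rw [count_between hSsubT (by omega), hTcard]
      · rw [if_neg hk₀j]
        rw [Finset.mem_range] at hk₀j
        rw [count_between_zero (by omega)]
    · have hL : (∑ E' : Set D.E, if (D.CycleFree E' ∧ E'.ncard = j) ∧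
          (∃ S, D.IsOrientedSpanningTreeRev T S r ∧ S ⊆ E' ∧ E' ⊆ T) then 1 else 0) = 0 := by
        apply Finset.sum_eq_zero
        intro E' _
        rw [if_neg]
        rintro ⟨_, S', hS', _, _⟩
        exact hex ⟨S', hS'⟩
      have hR : (∑ k ∈ Finset.range (j + 1),
          (if D.IsKSpanningTree T r k then (Nat.card D.V - 1 - k).choose (j - k) else 0)) = 0 := by
        apply Finset.sum_eq_zero
        intro k _
        rw [if_neg]
        rintro ⟨S', _, hS'⟩
        exact hex ⟨S', hS'⟩
      rw [hL, hR]
  rw [Finset.sum_congr rfl (fun T _ => hstep3 T), Finset.sum_comm]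
  apply Finset.sum_congr rfl
  intro k _
  rw [c_eq_filter, Finset.card_filter, Finset.mul_sum]
  apply Finset.sum_congr rfl
  intro T _
  by_cases h : D.IsKSpanningTree T r k <;> simp [h]

end Multidigraph
end Aux7

section Aux8

lemma choose_prod_eq (a t i : ℕ) (hi : i ≤ t) :
    (a + i).choose i * (a + t).choose (t - i) = (a + t).choose t * t.choose i := by
  have key := Nat.choose_mul (n := a + t) (k := a + i) (s := a)
    (by omega : a ≤ a + i)
  have h1 : (a + t) - a = t := by omega
  have h2 : (a + i) - a = i := by omega
  rw [h1, h2] at key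
  have h3 : (a + t).choose (a + i) = (a + t).choose (t - i) := by
    have := Nat.choose_symm (n := a + t) (k := a + i) (by omega)
    rw [show a + t - (a + i) = t - i by omega] at this
    exact this.symm
  have h4 : (a + i).choose a = (a + i).choose i := by
    have := Nat.choose_symm (n := a + i) (k := a) (by omega)
    rw [show a + i - a = i by omega] at this
    exact this.symm
  have h5 : (a + t).choose a = (a + t).choose t := by
    have := Nat.choose_symm (n := a + t) (k := a) (by omega)
    rw [show a + t - a = t by omega] at this
    exact this.symm
  rw [h3, h4, h5] at key
  rw [Nat.mul_comm] at key
  exact key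

lemma term_eq {N k m i : ℕ} (hm : m ≤ N) (hmk : m ≤ k) (hi : i ≤ k - m) :
    (N - (k - i)).choose i * (N - m).choose (k - i - m)
      = (N - m).choose (k - m) * (k - m).choose i := by
  by_cases hkN : k ≤ N
  · have e1 : N - (k - i) = (N - k) + i := by omega
    have e2 : N - m = (N - k) + (k - m) := by omega
    have e3 : k - i - m = (k - m) - i := by omega
    rw [e1, e2, e3]
    exact choose_prod_eq (N - k) (k - m) i hi
  · push_neg at hkN
    by_cases hi0 : i = 0
    · subst hi0
      simp
    · have hz1 : (N - (k - i)).choose i = 0 := Nat.choose_eq_zero_of_lt (by omega)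
      have hz2 : (N - m).choose (k - m) = 0 := Nat.choose_eq_zero_of_lt (by omega)
      rw [hz1, hz2, Nat.zero_mul, Nat.zero_mul]

lemma per_m {N k m : ℕ} (hm : m ≤ N) (hmk : m ≤ k) :
    (∑ i ∈ Finset.range (k + 1),
      if m ≤ k - i then
        ((-1 : ℤ) ^ i * ((N - (k - i)).choose i : ℤ) * ((N - m).choose (k - i - m) : ℤ))
      else 0)
    = if m = k then 1 else 0 := by
  have hsub : Finset.range (k - m + 1) ⊆ Finset.range (k + 1) :=
    Finset.range_subset_range.mpr (by omega)
  have hzero : ∀ i ∈ Finset.range (k + 1), i ∉ Finset.range (k - m + 1) →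
      (if m ≤ k - i then
        ((-1 : ℤ) ^ i * ((N - (k - i)).choose i : ℤ) * ((N - m).choose (k - i - m) : ℤ))
      else 0) = 0 := by
    intro i h1 h2
    rw [Finset.mem_range] at h1
    rw [Finset.mem_range] at h2
    rw [if_neg (by omega)]
  rw [← Finset.sum_subset hsub hzero]
  have hterm : ∀ i ∈ Finset.range (k - m + 1),
      (if m ≤ k - i then
        ((-1 : ℤ) ^ i * ((N - (k - i)).choose i : ℤ) * ((N - m).choose (k - i - m) : ℤ))
      else 0)
      = ((N - m).choose (k - m) : ℤ) * ((-1 : ℤ) ^ i * ((k - m).choose i : ℤ)) := by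
    intro i hi
    rw [Finset.mem_range] at hi
    rw [if_pos (by omega), mul_assoc,
      show (((N - (k - i)).choose i : ℤ) * ((N - m).choose (k - i - m) : ℤ))
        = (((N - m).choose (k - m) : ℤ) * ((k - m).choose i : ℤ)) from by
          exact_mod_cast term_eq hm hmk (by omega)]
    ring
  rw [Finset.sum_congr rfl hterm, ← Finset.mul_sum, Int.alternating_sum_range_choose]
  by_cases h : k - m = 0
  · have hmk2 : m = k := by omega
    rw [if_pos h, if_pos hmk2, h, Nat.choose_zero_right, Nat.cast_one, mul_one]
  · rw [if_neg h, if_neg (by omega : ¬ m = k), mul_zero]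

lemma sum_range_if_extend (f : ℕ → ℤ) {j k : ℕ} (h : j ≤ k) :
    ∑ m ∈ Finset.range (j + 1), f m
      = ∑ m ∈ Finset.range (k + 1), if m ≤ j then f m else 0 := by
  symm
  rw [Finset.sum_ite, Finset.sum_const_zero, add_zero]
  apply Finset.sum_congr _ (fun _ _ => rfl)
  ext x
  simp only [Finset.mem_filter, Finset.mem_range]
  omega

end Aux8


/-- `c_k(D,r) = ∑_{i=0}^{k} (-1)^i ∑_{cycle-free E', |E'|=k-i}
binom(|V(D)|-1-(k-i), i) · c_0(D/E', r)`. -/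
theorem stmt3 (D : Multidigraph) (hD : D.Eulerian) (r : D.V) (k : ℕ) :
    (D.c k r : ℤ) =
      ∑ i ∈ Finset.range (k + 1), (-1 : ℤ) ^ i *
        ∑ E' : Set D.E,
          if D.CycleFree E' ∧ Nat.card E' = k - i then
            ((Nat.card D.V - 1 - (k - i)).choose i : ℤ) *
              ((D.contract E').c 0
                (Quotient.mk (Relation.EqvGen.setoid (D.contractRel E')) r) : ℤ)
          else 0 := by
  classical
  have hper : ∀ i (E' : Set D.E),
      (if D.CycleFree E' ∧ Nat.card E' = k - i then
          ((Nat.card D.V - 1 - (k - i)).choose i : ℤ) *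
            ((D.contract E').c 0
              (Quotient.mk (Relation.EqvGen.setoid (D.contractRel E')) r) : ℤ)
        else 0)
      = ((Nat.card D.V - 1 - (k - i)).choose i : ℤ) *
          ((if D.CycleFree E' ∧ E'.ncard = k - i
            then (D.contract E').c 0 (Multidigraph.cmk E' r) else 0 : ℕ) : ℤ) := by
    intro i E'
    have hcond : (D.CycleFree E' ∧ Nat.card E' = k - i) ↔
        (D.CycleFree E' ∧ E'.ncard = k - i) := by
      rw [Nat.card_coe_set_eq]
    by_cases h : D.CycleFree E' ∧ E'.ncard = k - i
    · rw [if_pos (hcond.mpr h), if_pos h]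
    · rw [if_neg (fun hh => h (hcond.mp hh)), if_neg h, Nat.cast_zero, mul_zero]
  have key : ∀ i ∈ Finset.range (k + 1),
      ((-1 : ℤ) ^ i *
        ∑ E' : Set D.E,
          if D.CycleFree E' ∧ Nat.card E' = k - i then
            ((Nat.card D.V - 1 - (k - i)).choose i : ℤ) *
              ((D.contract E').c 0
                (Quotient.mk (Relation.EqvGen.setoid (D.contractRel E')) r) : ℤ)
          else 0)
      = ∑ m ∈ Finset.range (k + 1),
          (if m ≤ k - i then
            (-1 : ℤ) ^ i * ((Nat.card D.V - 1 - (k - i)).choose i : ℤ) *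
              (((Nat.card D.V - 1 - m).choose (k - i - m) : ℤ) * (D.c m r : ℤ))
          else 0) := by
    intro i hi
    rw [Finset.mem_range] at hi
    rw [Finset.sum_congr rfl (fun E' _ => hper i E'), ← Finset.mul_sum, ← Nat.cast_sum,
      Multidigraph.N_eq r (k - i), Nat.cast_sum,
      Finset.sum_congr rfl (fun m _ => Nat.cast_mul _ _),
      sum_range_if_extend
        (fun m => ((Nat.card D.V - 1 - m).choose (k - i - m) : ℤ) * (D.c m r : ℤ))
        (show k - i ≤ k by omega),
      Finset.mul_sum, Finset.mul_sum]
    apply Finset.sum_congr rfl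
    intro m _
    by_cases h : m ≤ k - i
    · rw [if_pos h, if_pos h]; ring
    · rw [if_neg h, if_neg h, mul_zero, mul_zero]
  have hm_eval : ∀ m ∈ Finset.range (k + 1),
      (∑ i ∈ Finset.range (k + 1),
        (if m ≤ k - i then
          (-1 : ℤ) ^ i * ((Nat.card D.V - 1 - (k - i)).choose i : ℤ) *
            (((Nat.card D.V - 1 - m).choose (k - i - m) : ℤ) * (D.c m r : ℤ))
        else 0))
      = if m = k then (D.c k r : ℤ) else 0 := by
    intro m hm
    rw [Finset.mem_range] at hm
    have hfac : ∀ i ∈ Finset.range (k + 1),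
        (if m ≤ k - i then
          (-1 : ℤ) ^ i * ((Nat.card D.V - 1 - (k - i)).choose i : ℤ) *
            (((Nat.card D.V - 1 - m).choose (k - i - m) : ℤ) * (D.c m r : ℤ))
        else 0)
        = (if m ≤ k - i then
            (-1 : ℤ) ^ i * ((Nat.card D.V - 1 - (k - i)).choose i : ℤ) *
              ((Nat.card D.V - 1 - m).choose (k - i - m) : ℤ)
          else 0) * (D.c m r : ℤ) := by
      intro i _
      by_cases h : m ≤ k - i
      · rw [if_pos h, if_pos h]; ring
      · rw [if_neg h, if_neg h, zero_mul]
    rw [Finset.sum_congr rfl hfac, ← Finset.sum_mul]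
    by_cases hmn : m ≤ Nat.card D.V - 1
    · rw [per_m hmn (by omega)]
      by_cases hmk2 : m = k
      · rw [if_pos hmk2, if_pos hmk2, one_mul, hmk2]
      · rw [if_neg hmk2, if_neg hmk2, zero_mul]
    · have hc : D.c m r = 0 := D.c_eq_zero r (by omega)
      rw [hc, Nat.cast_zero, mul_zero]
      by_cases hmk2 : m = k
      · rw [if_pos hmk2, ← hmk2, hc, Nat.cast_zero]
      · rw [if_neg hmk2]
  rw [Finset.sum_congr rfl key, Finset.sum_comm, Finset.sum_congr rfl hm_eval,
    Finset.sum_ite_eq' (Finset.range (k + 1)) k (fun _ => (D.c k r : ℤ)),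
    if_pos (Finset.self_mem_range_succ k)]
end
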